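/- arXiv:1909.10862 — 3 statements merged into one kernel-verified Lean document; each statement's English description precedes it below -/
import Mathlib

section
/- Consider an urn model with K colors satisfying Assumptions 1, 2 and 3. Let Y_n = χ_n R_n 1^T be the total amount added at trial n, and define δ_n = (χ_n R_n − (C_{n−1}/S_{n−1}) Y_n) − E[ (χ_n R_n − (C_{n−1}/S_{n−1}) Y_n) 1{‖R_n‖ ≤ n} | F_{n−1} ] and ξ_n = (C_{n−1}/S_{n−1})(H̃_{n−1} − H) − (C_{n−1}/S_{n−1})·( (C_{n−1}/S_{n−1})(H̃_{n−1} − H) 1^T ). Then with probability 1, (1/n) Σ_{m=1}^n δ_m → 0 and (1/n) Σ_{m=1}^n ξ_m → 0. -/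
open MeasureTheory Filter
open scoped Topology ENNReal ProbabilityTheory

set_option maxHeartbeats 1000000

noncomputable section

/-- Max row-sum norm `‖A‖ = max_i Σ_j |A i j|` of a `K × K` matrix. -/
def matNorm {K : ℕ} (A : Fin K → Fin K → ℝ) : ℝ := ⨆ i, ∑ j, |A i j|

/-- Irreducibility of a nonnegative square matrix. -/
def MatIrreducible {K : ℕ} (A : Fin K → Fin K → ℝ) : Prop :=
  ∀ i j, ∃ N : ℕ, 1 ≤ N ∧ 0 < (Matrix.of A ^ N) i j

namespace UrnAux

variable {K : ℕ}

lemma rowsum_le_matNorm (hK : 0 < K) (A : Fin K → Fin K → ℝ) (i : Fin K) :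
    ∑ j, |A i j| ≤ matNorm A := by
  haveI : Nonempty (Fin K) := ⟨⟨0, hK⟩⟩
  exact le_ciSup (f := fun i => ∑ j, |A i j|) (Set.Finite.bddAbove (Set.finite_range _)) i

lemma matNorm_nonneg (hK : 0 < K) (A : Fin K → Fin K → ℝ) : 0 ≤ matNorm A :=
  le_trans (Finset.sum_nonneg fun j _ => abs_nonneg _) (rowsum_le_matNorm hK A ⟨0,hK⟩)

lemma abs_le_matNorm (hK : 0 < K) (A : Fin K → Fin K → ℝ) (i j) : |A i j| ≤ matNorm A :=
  (Finset.single_le_sum (fun j _ => abs_nonneg (A i j)) (Finset.mem_univ j)).trans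
    (rowsum_le_matNorm hK A i)

lemma matNorm_eq_sup' (hK : 0 < K) (A : Fin K → Fin K → ℝ) :
    matNorm A = Finset.univ.sup' (by simpa using Finset.univ_nonempty_iff.2 ⟨⟨0,hK⟩⟩)
      (fun i => ∑ j, |A i j|) := by
  haveI : Nonempty (Fin K) := ⟨⟨0, hK⟩⟩
  rw [matNorm, ← Finset.sup'_univ_eq_ciSup]

lemma measurable_matNorm (hK : 0 < K) : Measurable (matNorm (K := K)) := by
  haveI : Nonempty (Fin K) := ⟨⟨0, hK⟩⟩
  have : (matNorm (K := K)) = Finset.univ.sup' (Finset.univ_nonempty)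
      (fun i => fun A : Fin K → Fin K → ℝ => ∑ j, |A i j|) := by
    funext A
    rw [matNorm_eq_sup' hK, Finset.sup'_apply]
  rw [this]
  exact Finset.measurable_sup' _ (fun i _ => by
    exact Finset.measurable_sum _ (fun j _ =>
      ((measurable_pi_apply j).comp (measurable_pi_apply i)).abs))

lemma sum_range_odd (t : ℕ) : ∑ k ∈ Finset.range t, (2*(k:ℝ)+1) = (t:ℝ)^2 := by
  induction t with
  | zero => simp
  | succ t ih => rw [Finset.sum_range_succ, ih]; push_cast; ring



lemma abel_identity (d : ℕ → ℝ) (n : ℕ) :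
    ∑ m ∈ Finset.Icc 1 n, d m
      = n * (∑ m ∈ Finset.Icc 1 n, (m:ℝ)⁻¹ * d m)
        - ∑ k ∈ Finset.range n, ∑ m ∈ Finset.Icc 1 k, (m:ℝ)⁻¹ * d m := by
  induction n with
  | zero => simp
  | succ n ih =>
    rw [Finset.sum_Icc_succ_top (by omega), Finset.sum_Icc_succ_top (by omega),
      Finset.sum_range_succ, ih]
    have h1 : ((n:ℝ)+1) ≠ 0 := by positivity
    push_cast
    field_simp
    ring

lemma kronecker {d : ℕ → ℝ} {L : ℝ}
    (h : Tendsto (fun n : ℕ => ∑ m ∈ Finset.Icc 1 n, (m:ℝ)⁻¹ * d m) atTop (𝓝 L)) :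
    Tendsto (fun n : ℕ => (n:ℝ)⁻¹ * ∑ m ∈ Finset.Icc 1 n, d m) atTop (𝓝 0) := by
  have hc := h.cesaro
  have hkey : ∀ᶠ n : ℕ in atTop, (n:ℝ)⁻¹ * ∑ m ∈ Finset.Icc 1 n, d m
      = (∑ m ∈ Finset.Icc 1 n, (m:ℝ)⁻¹ * d m)
        - (n:ℝ)⁻¹ * ∑ k ∈ Finset.range n, ∑ m ∈ Finset.Icc 1 k, (m:ℝ)⁻¹ * d m := by
    filter_upwards [Ici_mem_atTop 1] with n hn
    have hn' : (0:ℝ) < n := by exact_mod_cast Nat.lt_of_lt_of_le Nat.zero_lt_one hn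
    rw [abel_identity]
    field_simp
  have : Tendsto (fun n : ℕ => (∑ m ∈ Finset.Icc 1 n, (m:ℝ)⁻¹ * d m)
      - (n:ℝ)⁻¹ * ∑ k ∈ Finset.range n, ∑ m ∈ Finset.Icc 1 k, (m:ℝ)⁻¹ * d m)
      atTop (𝓝 (L - L)) := h.sub hc
  rw [sub_self] at this
  exact Tendsto.congr' (hkey.mono fun n h => h.symm) this

lemma cesaro_eventually_zero {u : ℕ → ℝ} (h : ∀ᶠ n in atTop, u n = 0) :
    Tendsto (fun n : ℕ => (n:ℝ)⁻¹ * ∑ m ∈ Finset.Icc 1 n, u m) atTop (𝓝 0) := by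
  obtain ⟨N, hN⟩ := eventually_atTop.1 h
  have hconst : ∀ n, N ≤ n → ∑ m ∈ Finset.Icc 1 n, u m = ∑ m ∈ Finset.Icc 1 N, u m := by
    intro n hn
    induction n with
    | zero => simp [show N = 0 by omega]
    | succ n ih =>
      rcases Nat.lt_or_ge N (n+1) with h1 | h1
      · rw [Finset.sum_Icc_succ_top (by omega), ih (by omega), hN (n+1) (by omega), add_zero]
      · have : N = n + 1 := by omega
        rw [this]
  have : Tendsto (fun n : ℕ => (n:ℝ)⁻¹ * ∑ m ∈ Finset.Icc 1 N, u m) atTop (𝓝 0) := by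
    have := tendsto_inv_atTop_nhds_zero_nat.mul_const (∑ m ∈ Finset.Icc 1 N, u m)
    simpa using this
  refine Tendsto.congr' ?_ this
  filter_upwards [Ici_mem_atTop N] with n hn
  rw [hconst n hn]



lemma integrable_bdd {Ω : Type} {m0 : MeasurableSpace Ω} {μ : Measure Ω} [IsFiniteMeasure μ]
    {f : Ω → ℝ} (hm : AEStronglyMeasurable f μ) {Cb : ℝ} (h : ∀ᵐ ω ∂μ, |f ω| ≤ Cb) :
    Integrable f μ :=
  ⟨hm, HasFiniteIntegral.of_bounded (C := Cb) (h.mono fun ω hω => by rwa [Real.norm_eq_abs])⟩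



theorem mds_slln {Ω : Type} {m0 : MeasurableSpace Ω} {μ : Measure Ω} [IsProbabilityMeasure μ]
    (F : Filtration ℕ m0) (g : ℕ → Ω → ℝ) (b : ℕ → ℝ)
    (hgm : ∀ n, StronglyMeasurable[F n] (g n))
    (hgb : ∀ n ω, |g n ω| ≤ b n)
    (hsum : Summable (fun n : ℕ => (∫ ω, (g n ω)^2 ∂μ) / (n:ℝ)^2)) :
    ∀ᵐ ω ∂μ, Tendsto (fun n : ℕ => (n:ℝ)⁻¹ * ∑ m ∈ Finset.Icc 1 n,
      (g m ω - (μ[g m | F (m-1)]) ω)) atTop (𝓝 0) := by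
  haveI : Nonempty Ω := by
    by_contra h
    rw [not_nonempty_iff] at h
    have h1 := measure_univ (μ := μ)
    rw [Set.univ_eq_empty_iff.mpr h, measure_empty] at h1
    exact zero_ne_one h1
  have hble : ∀ n, 0 ≤ b n := fun n => (abs_nonneg _).trans (hgb n (Classical.arbitrary Ω))
  set cg : ℕ → Ω → ℝ := fun m => μ[g m | F (m-1)] with hcg
  have hgsm : ∀ n, AEStronglyMeasurable (g n) μ := fun n =>
    ((hgm n).mono (F.le n)).aestronglyMeasurable
  have hgint : ∀ n, Integrable (g n) μ := fun n => integrable_bdd (hgsm n) (ae_of_all _ (hgb n))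
  have hcgint : ∀ n, Integrable (cg n) μ := fun n => integrable_condExp
  have hcgb : ∀ n, ∀ᵐ ω ∂μ, |cg n ω| ≤ b n := by
    intro n
    have h := ae_bdd_condExp_of_ae_bdd (m := F (n-1)) (μ := μ) (R := ⟨b n, hble n⟩)
      (f := g n) (ae_of_all _ (hgb n))
    exact h
  set d : ℕ → Ω → ℝ := fun m ω => g m ω - cg m ω with hd
  have hdint : ∀ n, Integrable (d n) μ := fun n => (hgint n).sub (hcgint n)
  have hdm : ∀ n, StronglyMeasurable[F n] (d n) := fun n =>
    (hgm n).sub (stronglyMeasurable_condExp.mono (F.mono (Nat.sub_le n 1)))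
  have hdb : ∀ n, ∀ᵐ ω ∂μ, |d n ω| ≤ 2 * b n := by
    intro n
    filter_upwards [hcgb n] with ω hω
    calc |d n ω| ≤ |g n ω| + |cg n ω| := abs_sub _ _
    _ ≤ b n + b n := add_le_add (hgb n ω) hω
    _ = 2 * b n := by ring
  have hd0 : ∀ n, μ[d (n+1) | F n] =ᵐ[μ] 0 := by
    intro n
    have h1 : μ[d (n+1) | F n] =ᵐ[μ] μ[g (n+1)|F n] - μ[cg (n+1)|F n] :=
      condExp_sub (hgint _) (hcgint _) _
    have h2 : μ[cg (n+1) | F n] = cg (n+1) :=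
      condExp_of_stronglyMeasurable (F.le n) stronglyMeasurable_condExp (hcgint _)
    filter_upwards [h1] with ω hω
    rw [hω, Pi.sub_apply, h2]
    show (μ[g (n+1)|F n]) ω - cg (n+1) ω = 0
    rw [hcg]
    simp
  set M : ℕ → Ω → ℝ := fun n ω => ∑ m ∈ Finset.Icc 1 n, (m:ℝ)⁻¹ * d m ω with hM
  have hMadp : StronglyAdapted F M := by
    intro n
    apply Finset.stronglyMeasurable_fun_sum
    intro m hm
    exact ((hdm m).mono (F.mono (Finset.mem_Icc.1 hm).2)).const_mul _
  set BM : ℕ → ℝ := fun n => ∑ m ∈ Finset.Icc 1 n, (m:ℝ)⁻¹ * (2 * b m) with hBM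
  have hMb : ∀ n, ∀ᵐ ω ∂μ, |M n ω| ≤ BM n := by
    intro n
    have hall : ∀ᵐ ω ∂μ, ∀ m, |d m ω| ≤ 2 * b m := ae_all_iff.2 hdb
    filter_upwards [hall] with ω hω
    calc |M n ω| ≤ ∑ m ∈ Finset.Icc 1 n, |(m:ℝ)⁻¹ * d m ω| := Finset.abs_sum_le_sum_abs _ _
    _ ≤ BM n := Finset.sum_le_sum fun m _ => by
        rw [abs_mul, abs_inv, Nat.abs_cast]
        exact mul_le_mul_of_nonneg_left (hω m) (by positivity)
  have hMint : ∀ n, Integrable (M n) μ := fun n =>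
    integrable_bdd ((hMadp n).mono (F.le n)).aestronglyMeasurable (hMb n)
  have hmart : Martingale M F μ := by
    refine martingale_of_condExp_sub_eq_zero_nat hMadp hMint ?_
    intro n
    have hdiff : (M (n+1) - M n) = fun ω => (((n:ℝ)+1))⁻¹ * d (n+1) ω := by
      funext ω
      simp only [Pi.sub_apply, hM]
      rw [Finset.sum_Icc_succ_top (by omega)]
      push_cast
      ring
    rw [hdiff]
    have h1 : μ[fun ω => (((n:ℝ)+1))⁻¹ * d (n+1) ω | F n]
        =ᵐ[μ] (((n:ℝ)+1))⁻¹ • μ[d (n+1)|F n] := by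
      exact condExp_smul (μ := μ) (m := F n) ((((n:ℝ)+1))⁻¹) (d (n+1))
    filter_upwards [h1, hd0 n] with ω h1ω h2ω
    rw [h1ω, Pi.smul_apply, h2ω]
    simp
  have hprod_int : ∀ n, Integrable (M n * d (n+1)) μ := by
    intro n
    apply integrable_bdd (Cb := BM n * (2 * b (n+1)))
    · exact (((hMadp n).mono (F.le n)).mul ((hdm (n+1)).mono (F.le (n+1)))).aestronglyMeasurable
    · filter_upwards [hMb n, hdb (n+1)] with ω h1 h2
      rw [Pi.mul_apply, abs_mul]
      exact mul_le_mul h1 h2 (abs_nonneg _) ((abs_nonneg _).trans h1)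
  have hcross : ∀ n, ∫ ω, (M n * d (n+1)) ω ∂μ = 0 := by
    intro n
    have h2 : μ[M n * d (n+1) | F n] =ᵐ[μ] M n * μ[d (n+1)|F n] :=
      condExp_mul_of_stronglyMeasurable_left (hMadp n) (hprod_int n) (hdint (n+1))
    have h3 : μ[M n * d (n+1) | F n] =ᵐ[μ] 0 := by
      filter_upwards [h2, hd0 n] with ω hω h0ω
      rw [hω, Pi.mul_apply, h0ω]
      simp
    calc ∫ ω, (M n * d (n+1)) ω ∂μ = ∫ ω, (μ[M n * d (n+1)|F n]) ω ∂μ :=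
          (integral_condExp (F.le n)).symm
    _ = ∫ ω, (0 : Ω → ℝ) ω ∂μ := integral_congr_ae h3
    _ = 0 := by simp
  -- ∫ d² ≤ ∫ g²
  have hdsq : ∀ n, ∫ ω, (d n ω)^2 ∂μ ≤ ∫ ω, (g n ω)^2 ∂μ := by
    intro n
    have hcgsm : StronglyMeasurable[F (n-1)] (cg n) := stronglyMeasurable_condExp
    have hint_cgg : Integrable (cg n * g n) μ := by
      apply integrable_bdd (Cb := b n * b n)
      · exact ((hcgsm.mono (F.le (n-1))).mul ((hgm n).mono (F.le n))).aestronglyMeasurable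
      · filter_upwards [hcgb n] with ω h1
        rw [Pi.mul_apply, abs_mul]
        exact mul_le_mul h1 (hgb n ω) (abs_nonneg _) (hble n)
    have h2 : μ[cg n * g n | F (n-1)] =ᵐ[μ] cg n * μ[g n | F (n-1)] :=
      condExp_mul_of_stronglyMeasurable_left hcgsm hint_cgg (hgint n)
    have h3 : ∫ ω, cg n ω * g n ω ∂μ = ∫ ω, cg n ω * cg n ω ∂μ := by
      rw [show (∫ ω, cg n ω * g n ω ∂μ) = ∫ ω, (cg n * g n) ω ∂μ from rfl,
        ← integral_condExp (F.le (n-1)) (f := cg n * g n)]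
      refine integral_congr_ae ?_
      filter_upwards [h2] with ω hω
      rw [hω, Pi.mul_apply]
    have hint_cgsq : Integrable (fun ω => cg n ω * cg n ω) μ := by
      apply integrable_bdd (Cb := b n * b n)
      · exact ((hcgsm.mono (F.le (n-1))).mul (hcgsm.mono (F.le (n-1)))).aestronglyMeasurable
      · filter_upwards [hcgb n] with ω h1
        rw [abs_mul]
        exact mul_le_mul h1 h1 (abs_nonneg _) (hble n)
    have hint_gsq : Integrable (fun ω => (g n ω)^2) μ := by
      apply integrable_bdd (Cb := b n * b n)
      · exact (((hgm n).mono (F.le n)).mul ((hgm n).mono (F.le n))).aestronglyMeasurable.congr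
          (ae_of_all _ fun ω => by rw [Pi.mul_apply, ← sq])
      · refine ae_of_all _ fun ω => ?_
        rw [abs_pow, sq]
        exact mul_le_mul (hgb n ω) (hgb n ω) (abs_nonneg _) (hble n)
    have hexp : ∀ ω, (d n ω)^2 = ((g n ω)^2 - 2*(cg n ω * g n ω)) + cg n ω * cg n ω := by
      intro ω
      simp only [hd]
      ring
    have hint2 : Integrable (fun ω => 2*(cg n ω * g n ω)) μ := by
      have h5 := hint_cgg.const_mul 2
      refine h5.congr (ae_of_all _ fun ω => ?_)
      simp [Pi.mul_apply]
    have e1 : ∫ ω, (d n ω)^2 ∂μ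
        = ∫ ω, ((g n ω)^2 - 2*(cg n ω * g n ω) + cg n ω * cg n ω) ∂μ :=
      integral_congr_ae (ae_of_all _ hexp)
    have hsub : Integrable (fun ω => (g n ω)^2 - 2*(cg n ω * g n ω)) μ := hint_gsq.sub hint2
    rw [e1, integral_add hsub hint_cgsq, integral_sub hint_gsq hint2,
      integral_const_mul, h3]
    have hnn : 0 ≤ ∫ ω, cg n ω * cg n ω ∂μ :=
      integral_nonneg fun ω => mul_self_nonneg _
    linarith
  have hMsq_int : ∀ n, Integrable (fun ω => (M n ω)^2) μ := by
    intro n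
    apply integrable_bdd (Cb := BM n * BM n)
    · exact ((((hMadp n).mono (F.le n)).mul ((hMadp n).mono (F.le n))).aestronglyMeasurable).congr
        (ae_of_all _ fun ω => by rw [Pi.mul_apply, ← sq])
    · filter_upwards [hMb n] with ω h1
      rw [abs_pow, sq]
      exact mul_le_mul h1 h1 (abs_nonneg _) ((abs_nonneg _).trans h1)
  have hdsq_int : ∀ n, Integrable (fun ω => (d n ω)^2) μ := by
    intro n
    apply integrable_bdd (Cb := (2*b n) * (2*b n))
    · exact ((((hdm n).mono (F.le n)).mul ((hdm n).mono (F.le n))).aestronglyMeasurable).congr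
        (ae_of_all _ fun ω => by rw [Pi.mul_apply, ← sq])
    · filter_upwards [hdb n] with ω h1
      rw [abs_pow, sq]
      exact mul_le_mul h1 h1 (abs_nonneg _) ((abs_nonneg _).trans h1)
  have hvar : ∀ n, ∫ ω, (M n ω)^2 ∂μ
      ≤ ∑ m ∈ Finset.Icc 1 n, (∫ ω, (g m ω)^2 ∂μ) / (m:ℝ)^2 := by
    intro n
    induction n with
    | zero => simp [hM]
    | succ n ih =>
      set c : ℝ := ((n:ℝ)+1)⁻¹ with hc
      have hexp : ∀ ω, (M (n+1) ω)^2
          = ((M n ω)^2 + (2*c) * ((M n * d (n+1)) ω)) + c^2 * (d (n+1) ω)^2 := by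
        intro ω
        simp only [hM, Pi.mul_apply]
        rw [Finset.sum_Icc_succ_top (by omega)]
        push_cast
        ring
      have hi1 : Integrable (fun ω => (2*c) * ((M n * d (n+1)) ω)) μ := (hprod_int n).const_mul _
      have hi2 : Integrable (fun ω => c^2 * (d (n+1) ω)^2) μ := (hdsq_int (n+1)).const_mul _
      have e1 : ∫ ω, (M (n+1) ω)^2 ∂μ
          = ((∫ ω, (M n ω)^2 ∂μ) + (2*c) * (∫ ω, (M n * d (n+1)) ω ∂μ))
            + c^2 * ∫ ω, (d (n+1) ω)^2 ∂μ := by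
        rw [show (∫ ω, (M (n+1) ω)^2 ∂μ)
            = ∫ ω, ((M n ω)^2 + (2*c) * ((M n * d (n+1)) ω) + c^2 * (d (n+1) ω)^2) ∂μ from
          integral_congr_ae (ae_of_all _ hexp),
          integral_add (show Integrable (fun ω => (M n ω)^2 + (2*c) * ((M n * d (n+1)) ω)) μ
            from (hMsq_int n).add hi1) hi2, integral_add (hMsq_int n) hi1,
          integral_const_mul, integral_const_mul]
      rw [e1, hcross n, mul_zero, add_zero, Finset.sum_Icc_succ_top (by omega)]
      refine add_le_add ih ?_
      have h6 : c^2 * ∫ ω, (d (n+1) ω)^2 ∂μ ≤ c^2 * ∫ ω, (g (n+1) ω)^2 ∂μ :=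
        mul_le_mul_of_nonneg_left (hdsq (n+1)) (by positivity)
      refine h6.trans_eq ?_
      rw [hc]
      push_cast
      rw [inv_pow, div_eq_mul_inv]
      ring
  set B : ℝ := ∑' n : ℕ, (∫ ω, (g n ω)^2 ∂μ) / (n:ℝ)^2 with hB
  have hterm_nn : ∀ m : ℕ, 0 ≤ (∫ ω, (g m ω)^2 ∂μ) / (m:ℝ)^2 := fun m =>
    div_nonneg (integral_nonneg fun ω => sq_nonneg _) (sq_nonneg _)
  have hMB : ∀ n, ∫ ω, (M n ω)^2 ∂μ ≤ B := fun n =>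
    (hvar n).trans (Summable.sum_le_tsum (Finset.Icc 1 n) (fun m _ => hterm_nn m) hsum)
  have habs : ∀ n, ∫ ω, ‖M n ω‖ ∂μ ≤ 1 + B := by
    intro n
    have h1 : ∀ ω, ‖M n ω‖ ≤ 1 + (M n ω)^2 := by
      intro ω
      rw [Real.norm_eq_abs]
      rcases le_or_gt (|M n ω|) 1 with h | h
      · nlinarith [sq_nonneg (M n ω)]
      · nlinarith [sq_abs (M n ω)]
    calc ∫ ω, ‖M n ω‖ ∂μ ≤ ∫ ω, (1 + (M n ω)^2) ∂μ :=
          integral_mono (hMint n).norm ((integrable_const 1).add (hMsq_int n)) h1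
    _ = 1 + ∫ ω, (M n ω)^2 ∂μ := by
        rw [integral_add (integrable_const 1) (hMsq_int n), integral_const]
        simp
    _ ≤ 1 + B := by linarith [hMB n]
  have hbdd : ∀ n, eLpNorm (M n) 1 μ ≤ ((1 + B).toNNReal : ℝ≥0∞) := by
    intro n
    rw [eLpNorm_one_eq_lintegral_enorm, ← ofReal_integral_norm_eq_lintegral_enorm (hMint n)]
    exact ENNReal.ofReal_le_ofReal (habs n)
  have hae := hmart.submartingale.ae_tendsto_limitProcess hbdd
  filter_upwards [hae] with ω hω
  exact kronecker (L := F.limitProcess M μ ω) hω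

lemma bc {Ω : Type} {m0 : MeasurableSpace Ω} {μ : Measure Ω} (s : ℕ → Set Ω)
    (h : (∑' n, μ (s n)) ≠ ⊤) :
    ∀ᵐ ω ∂μ, ∀ᶠ n in atTop, ω ∉ s n := by
  filter_upwards [MeasureTheory.ae_finite_setOf_mem h] with ω hω
  obtain ⟨N, hN⟩ := hω.bddAbove
  rw [eventually_atTop]
  refine ⟨N+1, fun n hn hmem => ?_⟩
  exact absurd (hN hmem) (by omega)

lemma tsum_tail_lt_top {Ω : Type} {m0 : MeasurableSpace Ω} {μ : Measure Ω}
    [IsProbabilityMeasure μ] {X : Ω → ℝ} (hint : Integrable X μ) (hnn : 0 ≤ X) :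
    (∑' k : ℕ, μ {ω | (k:ℝ) < X ω}) < ∞ := by
  letI : MeasureSpace Ω := ⟨μ⟩
  haveI : IsProbabilityMeasure (ℙ : Measure Ω) := ‹IsProbabilityMeasure μ›
  have h := ProbabilityTheory.tsum_prob_mem_Ioi_lt_top hint hnn
  simp only [Set.mem_Ioi] at h
  exact h

lemma summable_trunc_sq_a {Ω : Type} {m0 : MeasurableSpace Ω} {μ : Measure Ω}
    [IsProbabilityMeasure μ]
    (mN : ℕ → Ω → ℝ) (hmeas : ∀ n, Measurable (mN n)) (hnn : ∀ n ω, 0 ≤ mN n ω)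
    {c : ℝ} (hc : 0 < c) {Rmaj : Ω → ℝ} (hRpos : ∀ ω, 0 < Rmaj ω)
    (hRint : Integrable Rmaj μ)
    (hdom : ∀ n, 1 ≤ n → ∀ x : ℝ, 0 < x →
      μ {ω | x < mN n ω} ≤ ENNReal.ofReal c * μ {ω | x < Rmaj ω}) :
    Summable (fun n : ℕ =>
      (∫ ω, (mN n ω)^2 * (if mN n ω ≤ (n:ℝ) then 1 else 0) ∂μ) / (n:ℝ)^2)
    ∧ (∑' n : ℕ, μ {ω | (n:ℝ) < mN n ω}) < ∞ := by
  set q : ℕ → ℝ := fun k => (μ {ω | (k:ℝ) < Rmaj ω}).toReal with hq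
  have hqnn : ∀ k, 0 ≤ q k := fun k => ENNReal.toReal_nonneg
  have htail := tsum_tail_lt_top hRint (fun ω => (hRpos ω).le)
  have hqsum : Summable q := ENNReal.summable_toReal htail.ne
  -- tail sums
  have htail2 : (∑' n : ℕ, μ {ω | (n:ℝ) < mN n ω}) < ∞ := by
    have hb : ∀ n : ℕ, μ {ω | (n:ℝ) < mN n ω}
        ≤ (if n = 0 then 1 else 0) + ENNReal.ofReal c * μ {ω | (n:ℝ) < Rmaj ω} := by
      intro n
      rcases Nat.eq_zero_or_pos n with h0 | h0
      · subst h0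
        simp only [if_pos rfl]
        exact le_add_right prob_le_one
      · rw [if_neg (by omega)]
        rw [zero_add]
        exact hdom n h0 (n:ℝ) (by exact_mod_cast h0)
    calc (∑' n : ℕ, μ {ω | (n:ℝ) < mN n ω})
        ≤ ∑' n : ℕ, ((if n = 0 then 1 else 0) + ENNReal.ofReal c * μ {ω | (n:ℝ) < Rmaj ω}) :=
          ENNReal.tsum_le_tsum hb
    _ = (∑' n : ℕ, (if n = 0 then (1:ℝ≥0∞) else 0))
          + ENNReal.ofReal c * ∑' n : ℕ, μ {ω | (n:ℝ) < Rmaj ω} := by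
          rw [ENNReal.tsum_add, ENNReal.tsum_mul_left]
    _ < ∞ := by
        refine ENNReal.add_lt_top.2 ⟨?_, ?_⟩
        · rw [tsum_eq_single 0 (by intro b hb; simp [hb])]
          · simp
        · exact ENNReal.mul_lt_top ENNReal.ofReal_lt_top htail
  refine ⟨?_, htail2⟩
  -- summability of truncated second moments
  set V : ℕ → ℝ := fun n => ∫ ω, (mN n ω)^2 * (if mN n ω ≤ (n:ℝ) then 1 else 0) ∂μ with hV
  have hVnn : ∀ n, 0 ≤ V n := fun n => integral_nonneg fun ω => by
    positivity
  have hmeas_ind : ∀ (n : ℕ) (k : ℕ), MeasurableSet {ω | (k:ℝ) < mN n ω} := fun n k =>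
    measurableSet_lt measurable_const (hmeas n)
  -- key pointwise bound and integral bound
  have hVle : ∀ n : ℕ, 1 ≤ n → V n ≤ 1 + ∑ k ∈ Finset.Ico 1 n, (2*(k:ℝ)+1) * (c * q k) := by
    intro n hn1
    have hpt : ∀ ω, (mN n ω)^2 * (if mN n ω ≤ (n:ℝ) then 1 else 0)
        ≤ ∑ k ∈ Finset.range n, (2*(k:ℝ)+1) * (if (k:ℝ) < mN n ω then 1 else 0) := by
      intro ω
      set x := mN n ω with hx
      have hx0 : 0 ≤ x := hnn n ω
      by_cases hxn : x ≤ (n:ℝ)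
      · rw [if_pos hxn, mul_one]
        set t : ℕ := ⌈x⌉₊ with ht
        have htn : t ≤ n := Nat.ceil_le.2 hxn
        have h1 : ∑ k ∈ Finset.range n, (2*(k:ℝ)+1) * (if (k:ℝ) < x then 1 else 0)
            ≥ ∑ k ∈ Finset.range t, (2*(k:ℝ)+1) := by
          rw [← Finset.sum_range_add_sum_Ico _ htn]
          have e2 : ∀ k ∈ Finset.range t, (2*(k:ℝ)+1) * (if (k:ℝ) < x then 1 else 0)
              = (2*(k:ℝ)+1) := by
            intro k hk
            rw [if_pos (Nat.lt_ceil.1 (Finset.mem_range.1 hk)), mul_one]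
          rw [Finset.sum_congr rfl e2]
          have : 0 ≤ ∑ k ∈ Finset.Ico t n, (2*(k:ℝ)+1) * (if (k:ℝ) < x then 1 else 0) :=
            Finset.sum_nonneg fun k _ => by positivity
          linarith
        refine le_trans ?_ h1
        rw [sum_range_odd]
        have := Nat.le_ceil x
        exact pow_le_pow_left₀ hx0 this 2
      · rw [if_neg hxn, mul_zero]
        exact Finset.sum_nonneg fun k _ => by positivity
    have hsm1 : AEStronglyMeasurable (fun ω => (mN n ω)^2 * (if mN n ω ≤ (n:ℝ) then 1 else 0)) μ := by
      apply Measurable.aestronglyMeasurable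
      apply Measurable.mul
      · exact ((hmeas n).pow_const 2)
      · exact Measurable.ite (measurableSet_le (hmeas n) measurable_const)
          measurable_const measurable_const
    have hint1 : Integrable (fun ω => (mN n ω)^2 * (if mN n ω ≤ (n:ℝ) then 1 else 0)) μ := by
      refine integrable_bdd (Cb := (n:ℝ)^2) hsm1 ?_
      refine ae_of_all _ fun ω => ?_
      by_cases hxn : mN n ω ≤ (n:ℝ)
      · rw [if_pos hxn, mul_one, abs_of_nonneg (by positivity)]
        exact pow_le_pow_left₀ (hnn n ω) hxn 2
      · rw [if_neg hxn, mul_zero, abs_zero]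
        positivity
    have hint2 : Integrable (fun ω => ∑ k ∈ Finset.range n,
        (2*(k:ℝ)+1) * (if (k:ℝ) < mN n ω then 1 else 0)) μ := by
      apply integrable_finset_sum
      intro k _
      apply Integrable.const_mul
      refine integrable_bdd (Cb := 1)
        ((Measurable.ite (hmeas_ind n k) measurable_const measurable_const).aestronglyMeasurable) ?_
      refine ae_of_all _ fun ω => ?_
      split_ifs <;> simp
    have h2 : V n ≤ ∫ ω, (∑ k ∈ Finset.range n,
        (2*(k:ℝ)+1) * (if (k:ℝ) < mN n ω then 1 else 0)) ∂μ :=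
      integral_mono hint1 hint2 hpt
    have h3 : ∫ ω, (∑ k ∈ Finset.range n,
        (2*(k:ℝ)+1) * (if (k:ℝ) < mN n ω then 1 else 0)) ∂μ
        = ∑ k ∈ Finset.range n, (2*(k:ℝ)+1) * (μ {ω | (k:ℝ) < mN n ω}).toReal := by
      rw [integral_finset_sum]
      · refine Finset.sum_congr rfl fun k _ => ?_
        rw [integral_const_mul]
        congr 1
        have : (fun ω => if (k:ℝ) < mN n ω then (1:ℝ) else 0)
            = Set.indicator {ω | (k:ℝ) < mN n ω} (fun _ => (1:ℝ)) := by
          funext ω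
          rw [Set.indicator_apply]
          rfl
        rw [this]
        exact integral_indicator_one (hmeas_ind n k)
      · intro k _
        apply Integrable.const_mul
        refine integrable_bdd (Cb := 1)
          ((Measurable.ite (hmeas_ind n k) measurable_const measurable_const).aestronglyMeasurable) ?_
        refine ae_of_all _ fun ω => ?_
        split_ifs <;> simp
    have h4 : ∑ k ∈ Finset.range n, (2*(k:ℝ)+1) * (μ {ω | (k:ℝ) < mN n ω}).toReal
        ≤ 1 + ∑ k ∈ Finset.Ico 1 n, (2*(k:ℝ)+1) * (c * q k) := by
      have hsplit : Finset.range n = insert 0 (Finset.Ico 1 n) := by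
        ext x
        simp only [Finset.mem_range, Finset.mem_insert, Finset.mem_Ico]
        omega
      rw [hsplit, Finset.sum_insert (by simp)]
      refine add_le_add ?_ (Finset.sum_le_sum fun k hk => ?_)
      · simp only [Nat.cast_zero, mul_zero, zero_add, one_mul]
        exact ENNReal.toReal_le_of_le_ofReal zero_le_one (by simpa using prob_le_one)
      · have hk1 : 1 ≤ k := (Finset.mem_Ico.1 hk).1
        refine mul_le_mul_of_nonneg_left ?_ (by positivity)
        have hd := hdom n hn1 (k:ℝ) (by exact_mod_cast hk1)
        have hne : ENNReal.ofReal c * μ {ω | (k:ℝ) < Rmaj ω} ≠ ⊤ :=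
          (ENNReal.mul_lt_top ENNReal.ofReal_lt_top (measure_lt_top μ _)).ne
        calc (μ {ω | (k:ℝ) < mN n ω}).toReal
            ≤ (ENNReal.ofReal c * μ {ω | (k:ℝ) < Rmaj ω}).toReal := ENNReal.toReal_mono hne hd
        _ = c * q k := by
            rw [ENNReal.toReal_mul, ENNReal.toReal_ofReal hc.le]
    linarith [h2, h3 ▸ h4]
  -- now prove summability via bounded partial sums
  have hP : Summable (fun n : ℕ => ((n:ℝ)^2)⁻¹) := by
    have := Real.summable_one_div_nat_pow.2 (show 1 < 2 by omega)
    simpa [one_div] using this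
  set P : ℝ := ∑' n : ℕ, ((n:ℝ)^2)⁻¹ with hP'
  set Q : ℝ := ∑' k : ℕ, q k with hQ'
  have hQnn : 0 ≤ Q := tsum_nonneg hqnn
  refine summable_of_sum_range_le (c := P + 4*c*Q) (fun n => div_nonneg (hVnn n) (sq_nonneg _)) ?_
  intro Nn
  have hb1 : ∀ n ∈ Finset.range Nn, V n / (n:ℝ)^2
      ≤ ((n:ℝ)^2)⁻¹ + ∑ k ∈ Finset.Ico 1 Nn,
          (if k < n then (2*(k:ℝ)+1) * (c * q k) * ((n:ℝ)^2)⁻¹ else 0) := by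
    intro n hn
    have hterm_nn : ∀ k ∈ Finset.Ico 1 Nn,
        0 ≤ (if k < n then (2*(k:ℝ)+1) * (c * q k) * ((n:ℝ)^2)⁻¹ else 0) := by
      intro k _
      split_ifs with h
      · have := hqnn k
        positivity
      · exact le_refl 0
    rcases Nat.eq_zero_or_pos n with h0 | h0
    · subst h0
      have e0 : ((0:ℕ):ℝ)^2 = 0 := by norm_num
      rw [e0, div_zero]
      exact add_nonneg (by positivity) (Finset.sum_nonneg hterm_nn)
    · have hn' : n ≤ Nn := le_of_lt (Finset.mem_range.1 hn)
      have e5 : ∑ k ∈ Finset.Ico 1 Nn, (if k < n then (2*(k:ℝ)+1) * (c * q k) else 0)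
          = ∑ k ∈ Finset.Ico 1 n, (2*(k:ℝ)+1) * (c * q k) := by
        rw [← Finset.sum_filter]
        congr 1
        ext k
        simp only [Finset.mem_filter, Finset.mem_Ico]
        omega
      have e6 : (∑ k ∈ Finset.Ico 1 n, (2*(k:ℝ)+1) * (c * q k)) * ((n:ℝ)^2)⁻¹
          = ∑ k ∈ Finset.Ico 1 Nn,
              (if k < n then (2*(k:ℝ)+1) * (c * q k) * ((n:ℝ)^2)⁻¹ else 0) := by
        rw [← e5, Finset.sum_mul]
        exact Finset.sum_congr rfl fun k _ => by rw [ite_mul, zero_mul]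
      have h6 : V n / (n:ℝ)^2
          ≤ (1 + ∑ k ∈ Finset.Ico 1 n, (2*(k:ℝ)+1) * (c * q k)) * ((n:ℝ)^2)⁻¹ := by
        rw [div_eq_mul_inv]
        have hnpos : (0:ℝ) < (n:ℝ) := by exact_mod_cast h0
        exact mul_le_mul_of_nonneg_right (hVle n h0) (by positivity)
      calc V n / (n:ℝ)^2
          ≤ (1 + ∑ k ∈ Finset.Ico 1 n, (2*(k:ℝ)+1) * (c * q k)) * ((n:ℝ)^2)⁻¹ := h6
      _ = ((n:ℝ)^2)⁻¹ + (∑ k ∈ Finset.Ico 1 n, (2*(k:ℝ)+1) * (c * q k)) * ((n:ℝ)^2)⁻¹ := by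
          ring
      _ = ((n:ℝ)^2)⁻¹ + ∑ k ∈ Finset.Ico 1 Nn,
            (if k < n then (2*(k:ℝ)+1) * (c * q k) * ((n:ℝ)^2)⁻¹ else 0) := by rw [e6]
  calc ∑ n ∈ Finset.range Nn, V n / (n:ℝ)^2
      ≤ ∑ n ∈ Finset.range Nn, (((n:ℝ)^2)⁻¹ + ∑ k ∈ Finset.Ico 1 Nn,
          (if k < n then (2*(k:ℝ)+1) * (c * q k) * ((n:ℝ)^2)⁻¹ else 0)) :=
        Finset.sum_le_sum hb1
  _ = (∑ n ∈ Finset.range Nn, ((n:ℝ)^2)⁻¹)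
      + ∑ n ∈ Finset.range Nn, ∑ k ∈ Finset.Ico 1 Nn,
          (if k < n then (2*(k:ℝ)+1) * (c * q k) * ((n:ℝ)^2)⁻¹ else 0) :=
        Finset.sum_add_distrib
  _ ≤ P + 4*c*Q := by
      refine add_le_add ?_ ?_
      · exact Summable.sum_le_tsum _ (fun n _ => by positivity) hP
      · rw [Finset.sum_comm]
        have e7 : ∀ k : ℕ, ∑ n ∈ Finset.range Nn,
            (if k < n then (2*(k:ℝ)+1) * (c * q k) * ((n:ℝ)^2)⁻¹ else 0)
            = ((2*(k:ℝ)+1) * (c * q k)) * ∑ n ∈ Finset.Ioo k Nn, ((n:ℝ)^2)⁻¹ := by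
          intro k
          rw [← Finset.sum_filter,
            show (Finset.range Nn).filter (fun n => k < n) = Finset.Ioo k Nn from by
              ext x; simp only [Finset.mem_filter, Finset.mem_range, Finset.mem_Ioo]; omega,
            ← Finset.mul_sum]
        have e8 : ∀ k : ℕ, 1 ≤ k → ((2*(k:ℝ)+1) * (c * q k)) * ∑ n ∈ Finset.Ioo k Nn, ((n:ℝ)^2)⁻¹
            ≤ 4 * (c * q k) := by
          intro k _
          have hs := sum_Ioo_inv_sq_le (α := ℝ) k Nn
          have hcq : 0 ≤ c * q k := by have := hqnn k; positivity
          have h9 : ((2*(k:ℝ)+1)) * (2 / ((k:ℝ)+1)) ≤ 4 := by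
            rw [mul_div_assoc', div_le_iff₀ (by positivity)]
            push_cast
            nlinarith [Nat.cast_nonneg (α := ℝ) k]
          calc ((2*(k:ℝ)+1) * (c * q k)) * ∑ n ∈ Finset.Ioo k Nn, ((n:ℝ)^2)⁻¹
              ≤ ((2*(k:ℝ)+1) * (c * q k)) * (2 / ((k:ℝ)+1)) := by
                refine mul_le_mul_of_nonneg_left ?_ (by positivity)
                exact_mod_cast hs
          _ = (c * q k) * ((2*(k:ℝ)+1) * (2 / ((k:ℝ)+1))) := by ring
          _ ≤ (c * q k) * 4 := mul_le_mul_of_nonneg_left h9 hcq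
          _ = 4 * (c * q k) := by ring
        calc ∑ k ∈ Finset.Ico 1 Nn, ∑ n ∈ Finset.range Nn,
              (if k < n then (2*(k:ℝ)+1) * (c * q k) * ((n:ℝ)^2)⁻¹ else 0)
            ≤ ∑ k ∈ Finset.Ico 1 Nn, 4 * (c * q k) := by
              refine Finset.sum_le_sum fun k hk => ?_
              rw [e7 k]
              exact e8 k (Finset.mem_Ico.1 hk).1
        _ = 4 * c * ∑ k ∈ Finset.Ico 1 Nn, q k := by
            rw [Finset.mul_sum]
            exact Finset.sum_congr rfl fun k _ => by ring
        _ ≤ 4 * c * Q := by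
            refine mul_le_mul_of_nonneg_left ?_ (by positivity)
            exact Summable.sum_le_tsum _ (fun k _ => hqnn k) hqsum



lemma integrable_bdd' {Ω : Type} {m0 : MeasurableSpace Ω} {μ : Measure Ω} [IsFiniteMeasure μ]
    {f : Ω → ℝ} (hm : AEStronglyMeasurable f μ) {Cb : ℝ} (h : ∀ᵐ ω ∂μ, |f ω| ≤ Cb) :
    Integrable f μ :=
  ⟨hm, HasFiniteIntegral.of_bounded (C := Cb) (h.mono fun ω hω => by rwa [Real.norm_eq_abs])⟩

lemma summable_trunc_sq_b {Ω : Type} {m0 : MeasurableSpace Ω} {μ : Measure Ω}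
    [IsProbabilityMeasure μ]
    (mN : ℕ → Ω → ℝ) (hmeas : ∀ n, Measurable (mN n)) (hnn : ∀ n ω, 0 ≤ mN n ω)
    (φ : ℝ → ℝ) (hφ0 : ∀ x, 0 ≤ x → 0 ≤ φ x)
    (hφpos : ∃ x₀ : ℝ, ∀ x, x₀ ≤ x → 0 < φ x)
    (hφmono : ∃ x₀ : ℝ, ∀ x y, x₀ ≤ x → x ≤ y → φ x ≤ φ y)
    (hφsum : Summable fun n : ℕ => 1 / ((n:ℝ) * φ (n:ℝ)))
    (hxφ : ∃ x₀ : ℝ, ∀ x y, x₀ ≤ x → x ≤ y → x / φ x ≤ y / φ y)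
    {M : ℝ≥0∞} (hM : M < ⊤)
    (hMb : ∀ n : ℕ, 1 ≤ n → ∫⁻ ω, ENNReal.ofReal (mN n ω * φ (mN n ω)) ∂μ ≤ M) :
    Summable (fun n : ℕ =>
      (∫ ω, (mN n ω)^2 * (if mN n ω ≤ (n:ℝ) then 1 else 0) ∂μ) / (n:ℝ)^2)
    ∧ (∑' n : ℕ, μ {ω | (n:ℝ) < mN n ω}) < ∞ := by
  obtain ⟨a, ha⟩ := hφpos
  obtain ⟨b2, hb2⟩ := hφmono
  obtain ⟨a3, ha3⟩ := hxφ
  set x₁ : ℝ := max (max a b2) (max a3 1) with hx₁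
  have hx₁a : a ≤ x₁ := le_max_of_le_left (le_max_left _ _)
  have hx₁b : b2 ≤ x₁ := le_max_of_le_left (le_max_right _ _)
  have hx₁a3 : a3 ≤ x₁ := le_max_of_le_right (le_max_left _ _)
  have hx₁1 : (1:ℝ) ≤ x₁ := le_max_of_le_right (le_max_right _ _)
  set N₁ : ℕ := ⌈x₁⌉₊ + 1 with hN₁'
  have hN₁ : x₁ ≤ (N₁:ℝ) := by
    refine (Nat.le_ceil x₁).trans ?_
    rw [hN₁']
    push_cast
    linarith
  have hN₁1 : 1 ≤ N₁ := by omega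
  set Mr : ℝ := M.toReal with hMr
  have hMrnn : 0 ≤ Mr := ENNReal.toReal_nonneg
  have hMeq : ENNReal.ofReal Mr = M := ENNReal.ofReal_toReal hM.ne
  have hs_meas : ∀ n : ℕ, MeasurableSet {ω | (n:ℝ) < mN n ω} := fun n =>
    measurableSet_lt measurable_const (hmeas n)
  have hfacts : ∀ n : ℕ, N₁ ≤ n → x₁ ≤ (n:ℝ) ∧ 0 < φ (n:ℝ) ∧ (0:ℝ) < n := by
    intro n hn
    have h1 : x₁ ≤ (n:ℝ) := hN₁.trans (by exact_mod_cast hn)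
    exact ⟨h1, ha _ (hx₁a.trans h1), lt_of_lt_of_le one_pos (hx₁1.trans h1)⟩
  -- tail bound
  have htail_bound : ∀ n : ℕ, N₁ ≤ n →
      μ {ω | (n:ℝ) < mN n ω} ≤ ENNReal.ofReal (Mr / ((n:ℝ) * φ (n:ℝ))) := by
    intro n hn
    obtain ⟨hnx, hφn, hnpos⟩ := hfacts n hn
    have hprodpos : (0:ℝ) < (n:ℝ) * φ (n:ℝ) := mul_pos hnpos hφn
    have key : ∀ ω ∈ {ω | (n:ℝ) < mN n ω},
        ENNReal.ofReal ((n:ℝ) * φ (n:ℝ)) ≤ ENNReal.ofReal (mN n ω * φ (mN n ω)) := by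
      intro ω hω
      have h1 : (n:ℝ) ≤ mN n ω := le_of_lt hω
      refine ENNReal.ofReal_le_ofReal ?_
      exact mul_le_mul h1 (hb2 _ _ (hx₁b.trans hnx) h1) hφn.le (hnn n ω)
    have h5 : ENNReal.ofReal ((n:ℝ) * φ (n:ℝ)) * μ {ω | (n:ℝ) < mN n ω} ≤ M := by
      calc ENNReal.ofReal ((n:ℝ) * φ (n:ℝ)) * μ {ω | (n:ℝ) < mN n ω}
          = ∫⁻ _ in {ω | (n:ℝ) < mN n ω}, ENNReal.ofReal ((n:ℝ) * φ (n:ℝ)) ∂μ :=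
            (setLIntegral_const _ _).symm
      _ ≤ ∫⁻ ω in {ω | (n:ℝ) < mN n ω}, ENNReal.ofReal (mN n ω * φ (mN n ω)) ∂μ :=
            lintegral_mono_ae ((ae_restrict_iff' (hs_meas n)).2 (ae_of_all _ key))
      _ ≤ ∫⁻ ω, ENNReal.ofReal (mN n ω * φ (mN n ω)) ∂μ := setLIntegral_le_lintegral _ _
      _ ≤ M := hMb n (le_trans hN₁1 hn)
    rw [ENNReal.ofReal_div_of_pos hprodpos, hMeq]
    rw [ENNReal.le_div_iff_mul_le (Or.inl (ENNReal.ofReal_pos.2 hprodpos).ne')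
      (Or.inl ENNReal.ofReal_ne_top)]
    rw [mul_comm]
    exact h5
  -- tail summability
  have hvsum : Summable (fun n : ℕ => Mr / ((n:ℝ) * φ (n:ℝ))) := by
    have h := hφsum.mul_left Mr
    refine h.congr fun n => ?_
    rw [mul_one_div]
  set v : ℕ → ℝ := fun n => if n < N₁ then 1 else Mr / ((n:ℝ) * φ (n:ℝ)) with hv
  have hvnn : ∀ n, 0 ≤ v n := by
    intro n
    simp only [hv]
    split_ifs with h
    · norm_num
    · push_neg at h
      obtain ⟨_, hφn, hnpos⟩ := hfacts n h
      positivity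
  have hvsum2 : Summable v := by
    have h1 : Summable (fun i : ℕ => Mr / (((i+N₁:ℕ):ℝ) * φ ((i+N₁:ℕ):ℝ))) :=
      (summable_nat_add_iff N₁).2 hvsum
    have h2 : (fun i : ℕ => v (i + N₁)) = fun i : ℕ => Mr / (((i+N₁:ℕ):ℝ) * φ ((i+N₁:ℕ):ℝ)) :=
      funext fun i => if_neg (by omega)
    exact (summable_nat_add_iff N₁).1 (h2 ▸ h1)
  have htail2 : (∑' n : ℕ, μ {ω | (n:ℝ) < mN n ω}) < ∞ := by
    have hb : ∀ n : ℕ, μ {ω | (n:ℝ) < mN n ω} ≤ ENNReal.ofReal (v n) := by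
      intro n
      simp only [hv]
      split_ifs with h
      · simpa using prob_le_one (μ := μ)
      · push_neg at h
        exact htail_bound n h
    calc (∑' n : ℕ, μ {ω | (n:ℝ) < mN n ω}) ≤ ∑' n : ℕ, ENNReal.ofReal (v n) :=
        ENNReal.tsum_le_tsum hb
    _ = ENNReal.ofReal (∑' n, v n) := (ENNReal.ofReal_tsum_of_nonneg hvnn hvsum2).symm
    _ < ∞ := ENNReal.ofReal_lt_top
  refine ⟨?_, htail2⟩
  -- moment bound
  set V : ℕ → ℝ := fun n => ∫ ω, (mN n ω)^2 * (if mN n ω ≤ (n:ℝ) then 1 else 0) ∂μ with hV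
  have hVnn : ∀ n, 0 ≤ V n := fun n => integral_nonneg fun ω => by positivity
  have hint1 : ∀ n : ℕ, Integrable (fun ω => (mN n ω)^2 * (if mN n ω ≤ (n:ℝ) then 1 else 0)) μ := by
    intro n
    have hsm1 : AEStronglyMeasurable
        (fun ω => (mN n ω)^2 * (if mN n ω ≤ (n:ℝ) then 1 else 0)) μ := by
      apply Measurable.aestronglyMeasurable
      exact ((hmeas n).pow_const 2).mul
        (Measurable.ite (measurableSet_le (hmeas n) measurable_const)
          measurable_const measurable_const)
    refine integrable_bdd' (Cb := (n:ℝ)^2) hsm1 (ae_of_all _ fun ω => ?_)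
    by_cases hxn : mN n ω ≤ (n:ℝ)
    · rw [if_pos hxn, mul_one, abs_of_nonneg (by positivity)]
      exact pow_le_pow_left₀ (hnn n ω) hxn 2
    · rw [if_neg hxn, mul_zero, abs_zero]
      positivity
  have hVb : ∀ n : ℕ, N₁ ≤ n → V n ≤ x₁^2 + ((n:ℝ)/φ (n:ℝ)) * Mr := by
    intro n hn
    obtain ⟨hnx, hφn, hnpos⟩ := hfacts n hn
    have hdivnn : 0 ≤ (n:ℝ)/φ (n:ℝ) := div_nonneg hnpos.le hφn.le
    have key : ∀ ω, (mN n ω)^2 * (if mN n ω ≤ (n:ℝ) then 1 else 0)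
        ≤ x₁^2 + ((n:ℝ)/φ (n:ℝ)) * (mN n ω * φ (mN n ω)) := by
      intro ω
      have hx0 : 0 ≤ mN n ω := hnn n ω
      have hsec : 0 ≤ mN n ω * φ (mN n ω) := mul_nonneg hx0 (hφ0 _ hx0)
      have hrhs2 : 0 ≤ ((n:ℝ)/φ (n:ℝ)) * (mN n ω * φ (mN n ω)) := mul_nonneg hdivnn hsec
      by_cases hind : mN n ω ≤ (n:ℝ)
      · rw [if_pos hind, mul_one]
        by_cases hx₁' : mN n ω < x₁
        · have h7 : (mN n ω)^2 ≤ x₁^2 := pow_le_pow_left₀ hx0 hx₁'.le 2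
          linarith
        · push_neg at hx₁'
          have hφx : 0 < φ (mN n ω) := ha _ (hx₁a.trans hx₁')
          have hr : mN n ω / φ (mN n ω) ≤ (n:ℝ)/φ (n:ℝ) := ha3 _ _ (hx₁a3.trans hx₁') hind
          have he : (mN n ω)^2 = (mN n ω / φ (mN n ω)) * (mN n ω * φ (mN n ω)) := by
            field_simp
          have h8 : (mN n ω)^2 ≤ ((n:ℝ)/φ (n:ℝ)) * (mN n ω * φ (mN n ω)) := by
            rw [he]
            exact mul_le_mul_of_nonneg_right hr hsec
          nlinarith [sq_nonneg x₁]
      · rw [if_neg hind, mul_zero]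
        positivity
    have hlin : ENNReal.ofReal (V n)
        ≤ ENNReal.ofReal (x₁^2) + ENNReal.ofReal ((n:ℝ)/φ (n:ℝ)) * M := by
      have hVlint : ENNReal.ofReal (V n)
          = ∫⁻ ω, ENNReal.ofReal ((mN n ω)^2 * (if mN n ω ≤ (n:ℝ) then 1 else 0)) ∂μ := by
        rw [hV]
        exact ofReal_integral_eq_lintegral_ofReal (hint1 n) (ae_of_all _ fun ω => by positivity)
      calc ENNReal.ofReal (V n)
          = ∫⁻ ω, ENNReal.ofReal ((mN n ω)^2 * (if mN n ω ≤ (n:ℝ) then 1 else 0)) ∂μ := hVlint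
      _ ≤ ∫⁻ ω, ENNReal.ofReal (x₁^2 + ((n:ℝ)/φ (n:ℝ)) * (mN n ω * φ (mN n ω))) ∂μ :=
          lintegral_mono fun ω => ENNReal.ofReal_le_ofReal (key ω)
      _ ≤ ∫⁻ ω, (ENNReal.ofReal (x₁^2)
            + ENNReal.ofReal (((n:ℝ)/φ (n:ℝ)) * (mN n ω * φ (mN n ω)))) ∂μ :=
          lintegral_mono fun ω => ENNReal.ofReal_add_le
      _ = ENNReal.ofReal (x₁^2)
            + ∫⁻ ω, ENNReal.ofReal (((n:ℝ)/φ (n:ℝ)) * (mN n ω * φ (mN n ω))) ∂μ := by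
          rw [lintegral_add_left measurable_const, lintegral_const]
          simp
      _ = ENNReal.ofReal (x₁^2)
            + ∫⁻ ω, ENNReal.ofReal ((n:ℝ)/φ (n:ℝ)) * ENNReal.ofReal (mN n ω * φ (mN n ω)) ∂μ := by
          congr 1
          refine lintegral_congr fun ω => ?_
          rw [ENNReal.ofReal_mul hdivnn]
      _ = ENNReal.ofReal (x₁^2)
            + ENNReal.ofReal ((n:ℝ)/φ (n:ℝ)) * ∫⁻ ω, ENNReal.ofReal (mN n ω * φ (mN n ω)) ∂μ := by
          rw [lintegral_const_mul' _ _ ENNReal.ofReal_ne_top]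
      _ ≤ ENNReal.ofReal (x₁^2) + ENNReal.ofReal ((n:ℝ)/φ (n:ℝ)) * M := by
          exact add_le_add le_rfl (mul_le_mul_right (hMb n (le_trans hN₁1 hn)) _)
    have h10 : V n = (ENNReal.ofReal (V n)).toReal := (ENNReal.toReal_ofReal (hVnn n)).symm
    rw [h10]
    calc (ENNReal.ofReal (V n)).toReal
        ≤ (ENNReal.ofReal (x₁^2) + ENNReal.ofReal ((n:ℝ)/φ (n:ℝ)) * M).toReal := by
          refine ENNReal.toReal_mono ?_ hlin
          exact (ENNReal.add_lt_top.2 ⟨ENNReal.ofReal_lt_top,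
            ENNReal.mul_lt_top ENNReal.ofReal_lt_top hM⟩).ne
    _ = x₁^2 + ((n:ℝ)/φ (n:ℝ)) * Mr := by
        rw [ENNReal.toReal_add (by simp) (ENNReal.mul_lt_top ENNReal.ofReal_lt_top hM).ne,
          ENNReal.toReal_mul, ENNReal.toReal_ofReal (sq_nonneg x₁),
          ENNReal.toReal_ofReal hdivnn]
  -- summability
  have hP : Summable (fun n : ℕ => ((n:ℝ)^2)⁻¹) := by
    have := Real.summable_one_div_nat_pow.2 (show 1 < 2 by omega)
    simpa [one_div] using this
  have hbsum : Summable (fun n : ℕ => x₁^2 * ((n:ℝ)^2)⁻¹ + Mr * (1 / ((n:ℝ) * φ (n:ℝ)))) :=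
    (hP.mul_left _).add (hφsum.mul_left _)
  have hshift : Summable (fun i : ℕ => V (i+N₁) / ((i+N₁:ℕ):ℝ)^2) := by
    refine Summable.of_nonneg_of_le (fun i => div_nonneg (hVnn _) (sq_nonneg _)) (fun i => ?_)
      ((summable_nat_add_iff N₁).2 hbsum)
    set n : ℕ := i + N₁ with hn'
    have hn : N₁ ≤ n := by omega
    obtain ⟨hnx, hφn, hnpos⟩ := hfacts n hn
    have he2 : (((n:ℝ)/φ (n:ℝ)) * Mr) / (n:ℝ)^2 = Mr * (1 / ((n:ℝ) * φ (n:ℝ))) := by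
      field_simp
    calc V n / (n:ℝ)^2 ≤ (x₁^2 + ((n:ℝ)/φ (n:ℝ)) * Mr) / (n:ℝ)^2 := by
          gcongr
          exact hVb n hn
    _ = x₁^2 * ((n:ℝ)^2)⁻¹ + (((n:ℝ)/φ (n:ℝ)) * Mr) / (n:ℝ)^2 := by
        rw [add_div]
        ring_nf
    _ = x₁^2 * ((n:ℝ)^2)⁻¹ + Mr * (1 / ((n:ℝ) * φ (n:ℝ))) := by rw [he2]
  exact (summable_nat_add_iff N₁).1 hshift

lemma xi_bound {K : ℕ} (hK : 0 < K) (p : Fin K → ℝ) (D : Fin K → Fin K → ℝ) (j : Fin K)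
    (hpnn : ∀ i, 0 ≤ p i) (hp1 : ∀ i, p i ≤ 1) (hps : ∑ i, p i = 1) :
    |(∑ i, p i * D i j) - p j * (∑ i, ∑ j', p i * D i j')| ≤ 2 * matNorm D := by
  have hDle : ∀ i j', |D i j'| ≤ matNorm D := abs_le_matNorm hK D
  have hrow : ∀ i, ∑ j', |D i j'| ≤ matNorm D := rowsum_le_matNorm hK D
  have h1 : |∑ i, p i * D i j| ≤ matNorm D := by
    calc |∑ i, p i * D i j| ≤ ∑ i, |p i * D i j| := Finset.abs_sum_le_sum_abs _ _
    _ ≤ ∑ i, p i * matNorm D := Finset.sum_le_sum fun i _ => by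
        rw [abs_mul, abs_of_nonneg (hpnn i)]
        exact mul_le_mul_of_nonneg_left (hDle i j) (hpnn i)
    _ = matNorm D := by rw [← Finset.sum_mul, hps, one_mul]
  have h2 : |∑ i, ∑ j', p i * D i j'| ≤ matNorm D := by
    calc |∑ i, ∑ j', p i * D i j'| ≤ ∑ i, |∑ j', p i * D i j'| := Finset.abs_sum_le_sum_abs _ _
    _ ≤ ∑ i, p i * matNorm D := Finset.sum_le_sum fun i _ => by
        rw [← Finset.mul_sum, abs_mul, abs_of_nonneg (hpnn i)]
        refine mul_le_mul_of_nonneg_left ?_ (hpnn i)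
        exact (Finset.abs_sum_le_sum_abs _ _).trans (hrow i)
    _ = matNorm D := by rw [← Finset.sum_mul, hps, one_mul]
  have h3 : |p j * (∑ i, ∑ j', p i * D i j')| ≤ matNorm D := by
    rw [abs_mul, abs_of_nonneg (hpnn j)]
    calc p j * |∑ i, ∑ j', p i * D i j'| ≤ 1 * matNorm D :=
        mul_le_mul (hp1 j) h2 (abs_nonneg _) zero_le_one
    _ = matNorm D := one_mul _
  calc |(∑ i, p i * D i j) - p j * (∑ i, ∑ j', p i * D i j')|
      ≤ |∑ i, p i * D i j| + |p j * (∑ i, ∑ j', p i * D i j')| := abs_sub _ _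
  _ ≤ matNorm D + matNorm D := add_le_add h1 h3
  _ = 2 * matNorm D := by ring

end UrnAux

/-- **Lemma.**  In an urn model satisfying Assumptions 1, 2 and 3, the martingale-difference
errors `δ_n` and the adjusted truncated conditional expectation errors `ξ_n` of the
stochastic approximation equation are Cesaro negligible almost surely. -/
theorem urn_error_terms_cesaro
    {Ω : Type} {m0 : MeasurableSpace Ω} {μ : Measure Ω} [IsProbabilityMeasure μ]
    {K : ℕ} (hK : 0 < K)
    (F : Filtration ℕ m0)
    (C : ℕ → Ω → Fin K → ℝ) (R : ℕ → Ω → Fin K → Fin K → ℝ) (χ : ℕ → Ω → Fin K)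
    (S : ℕ → Ω → ℝ) (hS : ∀ n ω, S n ω = ∑ i, C n ω i)
    (N : ℕ → Ω → Fin K → ℝ)
    (hN : ∀ n ω i, N n ω i = ∑ m ∈ Finset.Icc 1 n, (if χ m ω = i then (1:ℝ) else 0))
    -- evolution of the composition vector and nonnegativity of replacements
    (hEvol : ∀ n, 1 ≤ n → ∀ ω j, C n ω j = C (n-1) ω j + R n ω (χ n ω) j)
    (hRnonneg : ∀ n, 1 ≤ n → ∀ ω i j, 0 ≤ R n ω i j)
    -- adaptedness to the filtration `F_n = σ(C_0, (R_m, χ_m)_{m ≤ n})`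
    (hC0meas : Measurable[F 0] (C 0))
    (hχmeas : ∀ n, Measurable[F n] (χ n))
    (hRmeas : ∀ n, Measurable[F n] (R n))
    (hRint : ∀ n, 1 ≤ n → ∀ i j, Integrable (fun ω => R n ω i j) μ)
    -- Assumption 1
    (hC0nonneg : ∀ ω i, 0 ≤ C 0 ω i)
    (hC0ne : ∀ ω, C 0 ω ≠ 0)
    (hC0int : ∀ i, Integrable (fun ω => C 0 ω i) μ)
    (hCond : ∀ n, 1 ≤ n → ∀ i,
      μ[fun ω => (if χ n ω = i then (1:ℝ) else 0) | F (n-1)]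
        =ᵐ[μ] fun ω => C (n-1) ω i / S (n-1) ω)
    (hCondIndep : ∀ n, 1 ≤ n → ∀ (i : Fin K) (B : Set (Fin K → Fin K → ℝ)),
      MeasurableSet B →
      μ[fun ω => (if χ n ω = i then (1:ℝ) else 0) * Set.indicator B 1 (R n ω) | F (n-1)]
        =ᵐ[μ] fun ω =>
          (μ[fun ω' => (if χ n ω' = i then (1:ℝ) else 0) | F (n-1)]) ω *
          (μ[fun ω' => Set.indicator B 1 (R n ω') | F (n-1)]) ω)
    -- Assumption 2 : (a) majorization, or (b) a uniform `L φ(L)` moment bound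
    (hA2 :
      (∃ c : ℝ, 0 < c ∧ ∃ Rmaj : Ω → ℝ, Measurable Rmaj ∧ (∀ ω, 0 < Rmaj ω) ∧
        Integrable Rmaj μ ∧
        ∀ n, 1 ≤ n → ∀ x : ℝ, 0 < x →
          μ {ω | x < matNorm (R n ω)} ≤ ENNReal.ofReal c * μ {ω | x < Rmaj ω}) ∨
      (∃ φ : ℝ → ℝ, (∀ x, 0 ≤ x → 0 ≤ φ x) ∧
        (∃ x₀ : ℝ, ∀ x, x₀ ≤ x → 0 < φ x) ∧
        (∃ x₀ : ℝ, ∀ x y, x₀ ≤ x → x ≤ y → φ x ≤ φ y) ∧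
        (Summable fun n : ℕ => 1 / (n * φ n)) ∧
        (∃ x₀ : ℝ, ∀ x y, x₀ ≤ x → x ≤ y → x / φ x ≤ y / φ y) ∧
        (∃ M : ℝ≥0∞, M < ⊤ ∧ ∀ n, 1 ≤ n →
          ∫⁻ ω, ENNReal.ofReal (matNorm (R n ω) * φ (matNorm (R n ω))) ∂μ ≤ M)))
    -- Assumption 3 : a.s. irreducible limit of the truncated generating matrices
    (H : Ω → Fin K → Fin K → ℝ)
    (hHnonneg : ∀ᵐ ω ∂μ, ∀ i j, 0 ≤ H ω i j)
    (hHirr : ∀ᵐ ω ∂μ, MatIrreducible (H ω))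
    (hCesaro : ∀ᵐ ω ∂μ, Tendsto (fun n : ℕ =>
        (n : ℝ)⁻¹ * ∑ k ∈ Finset.range n,
          matNorm (fun i j =>
            (μ[fun ω' => R (k+1) ω' i j *
                (if matNorm (R (k+1) ω') ≤ ((k:ℝ)+1) then 1 else 0) | F k]) ω
            - H ω i j))
        atTop (𝓝 0))

    -- total amount added at trial `n`
    (Y : ℕ → Ω → ℝ) (hY : ∀ n, 1 ≤ n → ∀ ω, Y n ω = ∑ j, R n ω (χ n ω) j)
    -- the martingale difference error terms
    (δ : ℕ → Ω → Fin K → ℝ)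
    (hδ : ∀ n, 1 ≤ n → ∀ ω j, δ n ω j =
      (R n ω (χ n ω) j - C (n-1) ω j / S (n-1) ω * Y n ω) -
      (μ[fun ω' => (R n ω' (χ n ω') j - C (n-1) ω' j / S (n-1) ω' * Y n ω') *
          (if matNorm (R n ω') ≤ (n : ℝ) then 1 else 0) | F (n-1)]) ω)
    -- the adjusted truncated conditional expectation error terms
    (ξ : ℕ → Ω → Fin K → ℝ)
    (hξ : ∀ n, 1 ≤ n → ∀ ω j, ξ n ω j =
      (∑ i, C (n-1) ω i / S (n-1) ω *
        ((μ[fun ω' => R n ω' i j *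
            (if matNorm (R n ω') ≤ (n : ℝ) then 1 else 0) | F (n-1)]) ω - H ω i j)) -
      C (n-1) ω j / S (n-1) ω *
        (∑ i, ∑ j', C (n-1) ω i / S (n-1) ω *
          ((μ[fun ω' => R n ω' i j' *
              (if matNorm (R n ω') ≤ (n : ℝ) then 1 else 0) | F (n-1)]) ω - H ω i j'))) :
    ∀ᵐ ω ∂μ,
      Tendsto (fun n : ℕ => (n : ℝ)⁻¹ • ∑ m ∈ Finset.Icc 1 n, δ m ω) atTop (𝓝 0) ∧
      Tendsto (fun n : ℕ => (n : ℝ)⁻¹ • ∑ m ∈ Finset.Icc 1 n, ξ m ω) atTop (𝓝 0) := by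
  classical
  haveI : Nonempty (Fin K) := ⟨⟨0, hK⟩⟩
  -- nonnegativity and positivity facts
  have hCnn : ∀ n ω i, 0 ≤ C n ω i := by
    intro n
    induction n with
    | zero => exact hC0nonneg
    | succ n ih =>
      intro ω i
      rw [hEvol (n+1) (by omega) ω i]
      exact add_nonneg (ih ω i) (hRnonneg (n+1) (by omega) ω _ i)
  have hSpos : ∀ n ω, 0 < S n ω := by
    intro n ω
    induction n with
    | zero =>
      rw [hS]
      obtain ⟨i, hi⟩ := Function.ne_iff.1 (hC0ne ω)
      exact Finset.sum_pos' (fun k _ => hC0nonneg ω k)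
        ⟨i, Finset.mem_univ i, lt_of_le_of_ne (hC0nonneg ω i) (Ne.symm hi)⟩
    | succ n ih =>
      rw [hS]
      have h1 : S n ω ≤ ∑ i, C (n+1) ω i := by
        rw [hS]
        refine Finset.sum_le_sum fun i _ => ?_
        rw [hEvol (n+1) (by omega) ω i]
        have := hRnonneg (n+1) (by omega) ω (χ (n+1) ω) i
        simp only [Nat.add_sub_cancel]
        linarith
      linarith
  have hp01 : ∀ n ω i, 0 ≤ C n ω i / S n ω ∧ C n ω i / S n ω ≤ 1 := by
    intro n ω i
    refine ⟨div_nonneg (hCnn n ω i) (hSpos n ω).le, ?_⟩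
    rw [div_le_one (hSpos n ω), hS]
    exact Finset.single_le_sum (fun k _ => hCnn n ω k) (Finset.mem_univ i)
  have hpsum : ∀ n ω, ∑ i, C n ω i / S n ω = 1 := by
    intro n ω
    rw [← Finset.sum_div, ← hS, div_self (hSpos n ω).ne']
  -- measurability
  have hRm0 : ∀ n, Measurable (R n) := fun n => (hRmeas n).mono (F.le n) le_rfl
  have hmN_meas : ∀ n : ℕ, Measurable (fun ω => matNorm (R n ω)) := fun n =>
    (UrnAux.measurable_matNorm hK).comp (hRm0 n)
  have hmNn_meas : ∀ n : ℕ, Measurable[F n] (fun ω => matNorm (R n ω)) := fun n =>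
    (UrnAux.measurable_matNorm hK).comp (hRmeas n)
  have hRij : ∀ (n : ℕ) (i j' : Fin K), Measurable[F n] (fun ω => R n ω i j') := fun n i j' =>
    (measurable_pi_apply j').comp ((measurable_pi_apply i).comp (hRmeas n))
  have hRχ : ∀ (n : ℕ) (j' : Fin K), Measurable[F n] (fun ω => R n ω (χ n ω) j') := by
    intro n j'
    have he : (fun ω => R n ω (χ n ω) j')
        = fun ω => ∑ k, if χ n ω = k then R n ω k j' else 0 := by
      funext ω
      rw [Finset.sum_ite_eq]
      simp
    rw [he]
    refine Finset.measurable_sum _ fun k _ => Measurable.ite ?_ (hRij n k j') measurable_const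
    exact (hχmeas n) (measurableSet_singleton k)
  have hCmeas : ∀ (n : ℕ) (i : Fin K), Measurable[F n] (fun ω => C n ω i) := by
    intro n
    induction n with
    | zero => exact fun i => (measurable_pi_apply i).comp hC0meas
    | succ n ih =>
      intro i
      have he : (fun ω => C (n+1) ω i) = fun ω => C n ω i + R (n+1) ω (χ (n+1) ω) i :=
        funext fun ω => hEvol (n+1) (by omega) ω i
      rw [he]
      exact ((ih i).mono (F.mono (by omega)) le_rfl).add (hRχ (n+1) i)
  have hSmeas : ∀ n : ℕ, Measurable[F n] (S n) := by
    intro n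
    have he : S n = fun ω => ∑ i, C n ω i := funext fun ω => hS n ω
    rw [he]
    exact Finset.measurable_sum _ fun i _ => hCmeas n i
  have hYmeas : ∀ n : ℕ, 1 ≤ n → Measurable[F n] (Y n) := by
    intro n hn
    have he : Y n = fun ω => ∑ j', R n ω (χ n ω) j' := funext fun ω => hY n hn ω
    rw [he]
    exact Finset.measurable_sum _ fun j' _ => hRχ n j'
  -- truncated second moments and tails (Assumption 2)
  have hVtail : Summable (fun n : ℕ =>
        (∫ ω, (matNorm (R n ω))^2 * (if matNorm (R n ω) ≤ (n:ℝ) then 1 else 0) ∂μ) / (n:ℝ)^2)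
      ∧ (∑' n : ℕ, μ {ω | (n:ℝ) < matNorm (R n ω)}) < ∞ := by
    rcases hA2 with ⟨c, hc, Rmaj, _, hRmajpos, hRmajint, hdom⟩ |
      ⟨φ, hφ0, hφpos, hφmono, hφsum, hxφ, M, hM, hMb⟩
    · exact UrnAux.summable_trunc_sq_a (fun n ω => matNorm (R n ω)) hmN_meas
        (fun n ω => UrnAux.matNorm_nonneg hK _) hc hRmajpos hRmajint hdom
    · exact UrnAux.summable_trunc_sq_b (fun n ω => matNorm (R n ω)) hmN_meas
        (fun n ω => UrnAux.matNorm_nonneg hK _) φ hφ0 hφpos hφmono hφsum hxφ hM hMb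
  -- Borel-Cantelli: eventually no truncation
  have hBC : ∀ᵐ ω ∂μ, ∀ᶠ (n : ℕ) in atTop, matNorm (R n ω) ≤ (n:ℝ) := by
    have h := UrnAux.bc (fun n => {ω | (n:ℝ) < matNorm (R n ω)}) hVtail.2.ne
    filter_upwards [h] with ω hω
    filter_upwards [hω] with n hn
    simpa using hn
  -- martingale-difference part, coordinatewise
  set gf : Fin K → ℕ → Ω → ℝ := fun j m ω' =>
    if m = 0 then 0 else
      (R m ω' (χ m ω') j - C (m-1) ω' j / S (m-1) ω' * Y m ω') *
        (if matNorm (R m ω') ≤ (m:ℝ) then 1 else 0) with hgf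
  have hgfm : ∀ (j : Fin K) (m : ℕ), StronglyMeasurable[F m] (gf j m) := by
    intro j m
    rcases Nat.eq_zero_or_pos m with h0 | h0
    · subst h0
      simp only [hgf, if_pos rfl]
      exact stronglyMeasurable_const
    · have he : gf j m = fun ω' =>
          (R m ω' (χ m ω') j - C (m-1) ω' j / S (m-1) ω' * Y m ω') *
            (if matNorm (R m ω') ≤ (m:ℝ) then 1 else 0) :=
        funext fun ω' => if_neg (by omega)
      rw [he]
      refine Measurable.stronglyMeasurable ?_
      refine Measurable.mul ?_ ?_
      · refine (hRχ m j).sub (Measurable.mul ?_ (hYmeas m h0))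
        exact ((hCmeas (m-1) j).mono (F.mono (Nat.sub_le m 1)) le_rfl).div
          ((hSmeas (m-1)).mono (F.mono (Nat.sub_le m 1)) le_rfl)
      · exact Measurable.ite (measurableSet_le (hmNn_meas m) measurable_const)
          measurable_const measurable_const
  -- the pointwise bounds
  have hXbound : ∀ (j : Fin K) (m : ℕ), 1 ≤ m → ∀ ω,
      |R m ω (χ m ω) j - C (m-1) ω j / S (m-1) ω * Y m ω| ≤ matNorm (R m ω) := by
    intro j m hm ω
    have hnn := hRnonneg m hm ω
    have ha1 : 0 ≤ R m ω (χ m ω) j := hnn _ j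
    have ha2 : R m ω (χ m ω) j ≤ matNorm (R m ω) := by
      rw [← abs_of_nonneg ha1]
      exact UrnAux.abs_le_matNorm hK (R m ω) _ j
    have hy1 : 0 ≤ Y m ω := by
      rw [hY m hm ω]
      exact Finset.sum_nonneg fun j' _ => hnn _ j'
    have hy2 : Y m ω ≤ matNorm (R m ω) := by
      rw [hY m hm ω]
      refine le_trans ?_ (UrnAux.rowsum_le_matNorm hK (R m ω) (χ m ω))
      exact Finset.sum_le_sum fun j' _ => le_abs_self _
    obtain ⟨hp0, hp1⟩ := hp01 (m-1) ω j
    have hpy1 : 0 ≤ C (m-1) ω j / S (m-1) ω * Y m ω := mul_nonneg hp0 hy1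
    have hpy2 : C (m-1) ω j / S (m-1) ω * Y m ω ≤ matNorm (R m ω) := by
      calc C (m-1) ω j / S (m-1) ω * Y m ω ≤ 1 * Y m ω :=
            mul_le_mul_of_nonneg_right hp1 hy1
      _ = Y m ω := one_mul _
      _ ≤ matNorm (R m ω) := hy2
    rw [abs_le]
    constructor <;> linarith
  have hgfb : ∀ (j : Fin K) (m : ℕ) (ω : Ω), |gf j m ω| ≤ (m:ℝ) := by
    intro j m ω
    rcases Nat.eq_zero_or_pos m with h0 | h0
    · subst h0
      simp [hgf]
    · rw [hgf]
      simp only [if_neg (by omega : ¬ m = 0)]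
      by_cases hind : matNorm (R m ω) ≤ (m:ℝ)
      · rw [if_pos hind, mul_one]
        exact (hXbound j m h0 ω).trans hind
      · rw [if_neg hind, mul_zero, abs_zero]
        exact_mod_cast Nat.cast_nonneg m
  have hgfsum : ∀ j : Fin K,
      Summable (fun m : ℕ => (∫ ω, (gf j m ω)^2 ∂μ) / (m:ℝ)^2) := by
    intro j
    refine Summable.of_nonneg_of_le
      (fun m => div_nonneg (integral_nonneg fun ω => sq_nonneg _) (sq_nonneg _))
      (fun m => ?_) hVtail.1
    rcases Nat.eq_zero_or_pos m with h0 | h0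
    · subst h0
      simp [hgf]
    · have hmpos : (0:ℝ) < (m:ℝ)^2 := by
        have : (0:ℝ) < (m:ℝ) := by exact_mod_cast h0
        positivity
      rw [div_le_div_iff₀ hmpos hmpos]
      refine mul_le_mul_of_nonneg_right ?_ hmpos.le
      -- ∫ gf² ≤ ∫ mN² ind
      have hpt : ∀ ω, (gf j m ω)^2
          ≤ (matNorm (R m ω))^2 * (if matNorm (R m ω) ≤ (m:ℝ) then 1 else 0) := by
        intro ω
        rw [hgf]
        simp only [if_neg (by omega : ¬ m = 0)]
        by_cases hind : matNorm (R m ω) ≤ (m:ℝ)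
        · rw [if_pos hind, mul_one, mul_one]
          rw [← sq_abs]
          exact pow_le_pow_left₀ (abs_nonneg _) (hXbound j m h0 ω) 2
        · rw [if_neg hind, mul_zero, mul_zero]
          norm_num
      have hint_g : Integrable (fun ω => (gf j m ω)^2) μ := by
        refine UrnAux.integrable_bdd (Cb := (m:ℝ)^2) ?_ (ae_of_all _ fun ω => ?_)
        · exact ((((hgfm j m).mono (F.le m)).mul
            ((hgfm j m).mono (F.le m))).aestronglyMeasurable).congr
            (ae_of_all _ fun ω => by rw [Pi.mul_apply, ← sq])
        · rw [abs_pow, sq, sq]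
          exact mul_le_mul (hgfb j m ω) (hgfb j m ω) (abs_nonneg _) (Nat.cast_nonneg m)
      have hint_V : Integrable
          (fun ω => (matNorm (R m ω))^2 * (if matNorm (R m ω) ≤ (m:ℝ) then 1 else 0)) μ := by
        have hsm1 : AEStronglyMeasurable
            (fun ω => (matNorm (R m ω))^2 * (if matNorm (R m ω) ≤ (m:ℝ) then 1 else 0)) μ := by
          apply Measurable.aestronglyMeasurable
          exact ((hmN_meas m).pow_const 2).mul
            (Measurable.ite (measurableSet_le (hmN_meas m) measurable_const)
              measurable_const measurable_const)
        refine UrnAux.integrable_bdd (Cb := (m:ℝ)^2) hsm1 (ae_of_all _ fun ω => ?_)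
        by_cases hxn : matNorm (R m ω) ≤ (m:ℝ)
        · rw [if_pos hxn, mul_one, abs_of_nonneg (by positivity)]
          exact pow_le_pow_left₀ (UrnAux.matNorm_nonneg hK _) hxn 2
        · rw [if_neg hxn, mul_zero, abs_zero]
          positivity
      exact integral_mono hint_g hint_V hpt
  have hmds : ∀ᵐ ω ∂μ, ∀ j : Fin K, Tendsto (fun n : ℕ => (n:ℝ)⁻¹ * ∑ m ∈ Finset.Icc 1 n,
      (gf j m ω - (μ[gf j m | F (m-1)]) ω)) atTop (𝓝 0) := by
    rw [ae_all_iff]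
    intro j
    exact UrnAux.mds_slln F (gf j) (fun m => (m:ℝ)) (hgfm j) (hgfb j) (hgfsum j)
  -- reindexing helper
  have reidx : ∀ (f : ℕ → ℝ) (n : ℕ),
      ∑ m ∈ Finset.Icc 1 n, f (m-1) = ∑ k ∈ Finset.range n, f k := by
    intro f n
    induction n with
    | zero => simp
    | succ n ih =>
      rw [Finset.sum_Icc_succ_top (by omega), Finset.sum_range_succ, ih]
      simp
  -- final assembly
  filter_upwards [hmds, hBC, hCesaro] with ω hmdsω hbcω hcesω
  constructor
  · -- δ part
    rw [tendsto_pi_nhds]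
    intro j
    simp only [Pi.zero_apply]
    have hu : Tendsto (fun n : ℕ => (n:ℝ)⁻¹ * ∑ m ∈ Finset.Icc 1 n,
        ((R m ω (χ m ω) j - C (m-1) ω j / S (m-1) ω * Y m ω) *
          (1 - (if matNorm (R m ω) ≤ (m:ℝ) then 1 else 0)))) atTop (𝓝 0) := by
      apply UrnAux.cesaro_eventually_zero
      filter_upwards [hbcω] with m hm
      rw [if_pos hm]
      ring
    have hd := (hmdsω j).add hu
    rw [add_zero] at hd
    refine Tendsto.congr (fun n => ?_) hd
    rw [Pi.smul_apply, Finset.sum_apply, smul_eq_mul, ← mul_add, ← Finset.sum_add_distrib]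
    congr 1
    refine Finset.sum_congr rfl fun m hm => ?_
    have hm1 : 1 ≤ m := (Finset.mem_Icc.1 hm).1
    rw [hδ m hm1 ω j]
    have hgeq : gf j m = (fun ω' =>
        (R m ω' (χ m ω') j - C (m-1) ω' j / S (m-1) ω' * Y m ω') *
          (if matNorm (R m ω') ≤ (m:ℝ) then 1 else 0)) := by
      funext ω'
      rw [hgf]
      exact if_neg (by omega)
    rw [hgeq]
    ring
  · -- ξ part
    rw [tendsto_pi_nhds]
    intro j
    simp only [Pi.zero_apply]
    have hxb : ∀ m : ℕ, 1 ≤ m → |ξ m ω j|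
        ≤ 2 * matNorm (fun i j' => (μ[fun ω' => R m ω' i j' *
            (if matNorm (R m ω') ≤ (m:ℝ) then 1 else 0) | F (m-1)]) ω - H ω i j') := by
      intro m hm
      rw [hξ m hm ω j]
      exact UrnAux.xi_bound hK (fun i => C (m-1) ω i / S (m-1) ω)
        (fun i j' => (μ[fun ω' => R m ω' i j' *
            (if matNorm (R m ω') ≤ (m:ℝ) then 1 else 0) | F (m-1)]) ω - H ω i j') j
        (fun i => (hp01 (m-1) ω i).1) (fun i => (hp01 (m-1) ω i).2) (hpsum (m-1) ω)
    set Dseq : ℕ → ℝ := fun k => matNorm (fun i j' =>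
        (μ[fun ω' => R (k+1) ω' i j' *
            (if matNorm (R (k+1) ω') ≤ ((k:ℝ)+1) then 1 else 0) | F k]) ω - H ω i j')
      with hDseq
    have hxb2 : ∀ m : ℕ, 1 ≤ m → |ξ m ω j| ≤ 2 * Dseq (m-1) := by
      intro m hm
      obtain ⟨k, rfl⟩ : ∃ k, m = k + 1 := ⟨m - 1, by omega⟩
      have h := hxb (k+1) hm
      rw [hDseq]
      simp only [Nat.add_sub_cancel]
      convert h using 4
      push_cast
      ring
    refine squeeze_zero_norm
      (a := fun n : ℕ => 2 * ((n:ℝ)⁻¹ * ∑ k ∈ Finset.range n, Dseq k)) (fun n => ?_) ?_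
    · rw [Pi.smul_apply, Finset.sum_apply, smul_eq_mul, Real.norm_eq_abs, abs_mul,
        abs_inv, Nat.abs_cast]
      calc (n:ℝ)⁻¹ * |∑ m ∈ Finset.Icc 1 n, ξ m ω j|
          ≤ (n:ℝ)⁻¹ * ∑ m ∈ Finset.Icc 1 n, (2 * Dseq (m-1)) := by
            refine mul_le_mul_of_nonneg_left ?_ (by positivity)
            refine (Finset.abs_sum_le_sum_abs _ _).trans ?_
            exact Finset.sum_le_sum fun m hm => hxb2 m (Finset.mem_Icc.1 hm).1
      _ = 2 * ((n:ℝ)⁻¹ * ∑ k ∈ Finset.range n, Dseq k) := by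
          rw [show (∑ m ∈ Finset.Icc 1 n, (2 * Dseq (m-1)))
              = ∑ k ∈ Finset.range n, 2 * Dseq k from reidx (fun k => 2 * Dseq k) n,
            ← Finset.mul_sum]
          ring
    · have h := hcesω.const_mul 2
      rw [mul_zero] at h
      exact h.congr fun n => by rw [hDseq]

end
end

section
/- Consider an urn model with K colors satisfying Assumption 1. Suppose either (i) Assumption 2(a) holds with majorizing variable R satisfying E(R log_+ R) < ∞, or (ii) Assumption 2(b) holds. Then (1/n) Σ_{k=1}^n E[ ‖R_k‖ 1{‖R_k‖ > k} | F_{k−1} ] → 0 almost surely. -/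
open MeasureTheory Filter
open scoped Topology ENNReal

noncomputable section

lemma matNorm_eq_sup' {K : ℕ} (hK : 0 < K) (A : Fin K → Fin K → ℝ) :
    haveI : Nonempty (Fin K) := ⟨⟨0, hK⟩⟩
    matNorm A = Finset.univ.sup' Finset.univ_nonempty (fun i => ∑ j, |A i j|) := by
  haveI : Nonempty (Fin K) := ⟨⟨0, hK⟩⟩
  rw [matNorm, ← Finset.sup'_univ_eq_ciSup]

lemma matNorm_nonneg {K : ℕ} (hK : 0 < K) (A : Fin K → Fin K → ℝ) : 0 ≤ matNorm A := by
  haveI : Nonempty (Fin K) := ⟨⟨0, hK⟩⟩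
  rw [matNorm_eq_sup' hK]
  obtain ⟨i⟩ := ‹Nonempty (Fin K)›
  exact le_trans (Finset.sum_nonneg fun j _ => abs_nonneg _)
    (Finset.le_sup' (fun i => ∑ j, |A i j|) (Finset.mem_univ i))

lemma measurable_matNorm {K : ℕ} (hK : 0 < K) :
    Measurable (matNorm : (Fin K → Fin K → ℝ) → ℝ) := by
  haveI : Nonempty (Fin K) := ⟨⟨0, hK⟩⟩
  have h : (matNorm : (Fin K → Fin K → ℝ) → ℝ)
      = Finset.univ.sup' Finset.univ_nonempty
          (fun (i : Fin K) (A : Fin K → Fin K → ℝ) => ∑ j, |A i j|) := by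
    funext A
    rw [matNorm_eq_sup' hK, Finset.sup'_apply]
  rw [h]
  refine Finset.measurable_sup' _ fun i _ => ?_
  refine Finset.measurable_sum _ fun j _ => ?_
  exact ((measurable_pi_apply j).comp (measurable_pi_apply i)).abs

lemma aux_kronecker (a : ℕ → ℝ) (ha : ∀ k, 1 ≤ k → 0 ≤ a k)
    (h : Summable fun k : ℕ => a (k+1) / (k+1)) :
    Tendsto (fun n : ℕ => (n:ℝ)⁻¹ * ∑ k ∈ Finset.Icc 1 n, a k) atTop (𝓝 0) := by
  set b : ℕ → ℝ := fun k => a (k+1) / (k+1) with hbdef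
  have hbnn : ∀ k, 0 ≤ b k :=
    fun k => div_nonneg (ha _ (Nat.le_add_left 1 k)) (by positivity)
  have hak : ∀ k, 1 ≤ k → a k = k * b (k-1) := by
    intro k hk
    obtain ⟨j, rfl⟩ := Nat.exists_eq_add_of_le hk
    have e : 1 + j - 1 = j := by omega
    simp only [hbdef, e]
    rw [Nat.add_comm 1 j]
    push_cast
    field_simp
  rw [Metric.tendsto_atTop]
  intro ε hε
  have htail : Tendsto (fun m => ∑' k, b (k + m)) atTop (𝓝 0) := tendsto_sum_nat_add b
  obtain ⟨m, hm⟩ := (htail.eventually (gt_mem_nhds (half_pos hε))).exists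
  -- hm : ∑' k, b (k + m) < ε/2
  set Cm : ℝ := ∑ k ∈ Finset.Icc 1 m, a k with hCm
  have hCmnn : 0 ≤ Cm := Finset.sum_nonneg fun k hk => ha k (Finset.mem_Icc.mp hk).1
  have hninv : Tendsto (fun n : ℕ => (n:ℝ)⁻¹ * Cm) atTop (𝓝 0) := by
    simpa using (tendsto_inv_atTop_nhds_zero_nat.mul_const Cm)
  obtain ⟨N0, hN0⟩ := (Metric.tendsto_atTop.mp hninv) (ε/2) (half_pos hε)
  refine ⟨max (m+1) N0, fun n hn => ?_⟩
  have hnm : m ≤ n := le_trans (Nat.le_succ m) (le_trans (le_max_left _ _) hn)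
  have hn1 : 1 ≤ n := le_trans (by omega : 1 ≤ m+1) (le_trans (le_max_left _ _) hn)
  have hnpos : (0:ℝ) < n := by exact_mod_cast hn1
  -- split the sum
  have hsplit : ∑ k ∈ Finset.Icc 1 n, a k
      = Cm + ∑ k ∈ Finset.Ioc m n, a k := by
    rw [hCm]
    have h1 : Finset.Icc 1 n = Finset.Ioc 0 n := by
      ext x; simp [Finset.mem_Icc, Finset.mem_Ioc]; omega
    have h2 : Finset.Icc 1 m = Finset.Ioc 0 m := by
      ext x; simp [Finset.mem_Icc, Finset.mem_Ioc]; omega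
    rw [h1, h2, ← Finset.sum_Ioc_consecutive _ (Nat.zero_le m) hnm]
  -- bound tail part
  have hbound : ∑ k ∈ Finset.Ioc m n, a k ≤ n * (ε/2) := by
    have e1 : ∀ k ∈ Finset.Ioc m n, a k ≤ n * b (k-1) := by
      intro k hk
      obtain ⟨hk1, hk2⟩ := Finset.mem_Ioc.mp hk
      rw [hak k (by omega)]
      exact mul_le_mul_of_nonneg_right (by exact_mod_cast hk2) (hbnn _)
    calc ∑ k ∈ Finset.Ioc m n, a k ≤ ∑ k ∈ Finset.Ioc m n, (n:ℝ) * b (k-1) :=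
          Finset.sum_le_sum e1
      _ = (n:ℝ) * ∑ k ∈ Finset.Ioc m n, b (k-1) := by rw [Finset.mul_sum]
      _ ≤ (n:ℝ) * (ε/2) := by
          refine mul_le_mul_of_nonneg_left ?_ (le_of_lt hnpos)
          have hIoc : Finset.Ioc m n = Finset.Ico (m+1) (n+1) := by
            ext x; simp [Finset.mem_Ioc, Finset.mem_Ico]
          rw [hIoc, Finset.sum_Ico_eq_sum_range]
          have : ∀ i, b (m + 1 + i - 1) = b (i + m) := by
            intro i; congr 1; omega
          simp_rw [this]
          exact le_of_lt (lt_of_le_of_lt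
            (Summable.sum_le_tsum (Finset.range (n+1-(m+1))) (fun i _ => hbnn _)
              ((summable_nat_add_iff m).mpr h)) hm)
  have hvnn : 0 ≤ (n:ℝ)⁻¹ * ∑ k ∈ Finset.Icc 1 n, a k := by
    apply mul_nonneg (by positivity)
    exact Finset.sum_nonneg fun k hk => ha k (Finset.mem_Icc.mp hk).1
  rw [Real.dist_eq, sub_zero, abs_of_nonneg hvnn]
  have : (n:ℝ)⁻¹ * ∑ k ∈ Finset.Icc 1 n, a k ≤ (n:ℝ)⁻¹ * Cm + ε/2 := by
    rw [hsplit, mul_add]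
    refine add_le_add le_rfl ?_
    rw [inv_mul_le_iff₀ hnpos]
    exact hbound.trans (le_of_eq (by ring))
  refine lt_of_le_of_lt this ?_
  have h2 : (n:ℝ)⁻¹ * Cm < ε/2 := by
    have := hN0 n (le_trans (le_max_right _ _) hn)
    rwa [Real.dist_eq, sub_zero, abs_of_nonneg (mul_nonneg (by positivity) hCmnn)] at this
  linarith

lemma aux_main {Ω : Type} {m0 : MeasurableSpace Ω} {μ : Measure Ω} [IsProbabilityMeasure μ]
    (F : Filtration ℕ m0) (X : ℕ → Ω → ℝ)
    (hXnn : ∀ k ω, 0 ≤ X k ω)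
    (hXm : ∀ k, 1 ≤ k → AEStronglyMeasurable (X k) μ)
    (hsum : ∑' k : ℕ, (∫⁻ ω, ENNReal.ofReal (X (k+1) ω) ∂μ) / ((k+1 : ℕ) : ℝ≥0∞) < ⊤) :
    ∀ᵐ ω ∂μ, Tendsto (fun n : ℕ =>
      (n:ℝ)⁻¹ * ∑ k ∈ Finset.Icc 1 n, (μ[X k | F (k-1)]) ω) atTop (𝓝 0) := by
  have hconst : ∀ k : ℕ, ((k+1:ℕ) : ℝ≥0∞) ≠ 0 ∧ ((k+1:ℕ) : ℝ≥0∞) ≠ ⊤ := by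
    intro k
    refine ⟨by exact_mod_cast Nat.succ_ne_zero k, by simp⟩
  -- each lintegral is finite
  have hfin : ∀ k : ℕ, ∫⁻ ω, ENNReal.ofReal (X (k+1) ω) ∂μ < ⊤ := by
    intro k
    by_contra hcon
    push_neg at hcon
    have htop : ∫⁻ ω, ENNReal.ofReal (X (k+1) ω) ∂μ = ⊤ := top_le_iff.mp hcon
    have : (∫⁻ ω, ENNReal.ofReal (X (k+1) ω) ∂μ) / ((k+1 : ℕ) : ℝ≥0∞) = ⊤ := by
      rw [htop, ENNReal.top_div_of_ne_top (hconst k).2]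
    have hle := ENNReal.le_tsum (f := fun k : ℕ =>
      (∫⁻ ω, ENNReal.ofReal (X (k+1) ω) ∂μ) / ((k+1 : ℕ) : ℝ≥0∞)) k
    rw [this] at hle
    exact absurd (top_le_iff.mp hle) (by intro hc; rw [hc] at hsum; exact lt_irrefl _ hsum)
  -- integrability
  have hXint : ∀ k : ℕ, 1 ≤ k → Integrable (X k) μ := by
    intro k hk
    refine ⟨hXm k hk, ?_⟩
    rw [hasFiniteIntegral_iff_ofReal (ae_of_all _ (hXnn k))]
    obtain ⟨j, rfl⟩ : ∃ j, k = j + 1 := ⟨k - 1, by omega⟩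
    exact hfin j
  set a : ℕ → Ω → ℝ := fun k => μ[X k | F (k-1)] with hadef
  have hann : ∀ k : ℕ, 0 ≤ᵐ[μ] a k := fun k => condExp_nonneg (ae_of_all _ (hXnn k))
  have haint : ∀ k, Integrable (a k) μ := fun k => integrable_condExp
  have haeq : ∀ k : ℕ, 1 ≤ k →
      ∫⁻ ω, ENNReal.ofReal (a k ω) ∂μ = ∫⁻ ω, ENNReal.ofReal (X k ω) ∂μ := by
    intro k hk
    rw [← ofReal_integral_eq_lintegral_ofReal (haint k) (hann k),
        ← ofReal_integral_eq_lintegral_ofReal (hXint k hk) (ae_of_all _ (hXnn k)),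
        integral_condExp (F.le (k-1))]
  have hameas : ∀ k : ℕ, Measurable fun ω => ENNReal.ofReal (a k ω) :=
    fun k => ((stronglyMeasurable_condExp.mono (F.le (k-1))).measurable).ennreal_ofReal
  -- swap sum and integral
  have hswap : ∫⁻ ω, ∑' k : ℕ, ENNReal.ofReal (a (k+1) ω) / ((k+1 : ℕ) : ℝ≥0∞) ∂μ < ⊤ := by
    rw [lintegral_tsum (fun k => ((hameas (k+1)).div_const _).aemeasurable)]
    have : ∀ k : ℕ, ∫⁻ ω, ENNReal.ofReal (a (k+1) ω) / ((k+1 : ℕ) : ℝ≥0∞) ∂μ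
        = (∫⁻ ω, ENNReal.ofReal (X (k+1) ω) ∂μ) / ((k+1 : ℕ) : ℝ≥0∞) := by
      intro k
      simp_rw [div_eq_mul_inv]
      rw [lintegral_mul_const' _ _ (ENNReal.inv_ne_top.mpr (hconst k).1), haeq (k+1) (by omega)]
    simpa only [this] using hsum
  have hae1 : ∀ᵐ ω ∂μ, ∑' k : ℕ, ENNReal.ofReal (a (k+1) ω) / ((k+1 : ℕ) : ℝ≥0∞) < ⊤ :=
    ae_lt_top (Measurable.ennreal_tsum fun k => (hameas (k+1)).div_const _) hswap.ne
  have hae2 : ∀ᵐ ω ∂μ, ∀ k : ℕ, 0 ≤ a k ω := ae_all_iff.mpr hann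
  filter_upwards [hae1, hae2] with ω h1 h2
  refine aux_kronecker (fun k => a k ω) (fun k _ => h2 k) ?_
  have hsummable := ENNReal.summable_toReal h1.ne
  have : (fun k : ℕ => (ENNReal.ofReal (a (k+1) ω) / ((k+1 : ℕ) : ℝ≥0∞)).toReal)
      = fun k : ℕ => a (k+1) ω / ((k+1 : ℕ) : ℝ) := by
    funext k
    rw [ENNReal.toReal_div, ENNReal.toReal_ofReal (h2 (k+1)), ENNReal.toReal_natCast]
  rw [this] at hsummable
  convert hsummable using 2 with k
  push_cast
  ring

section Cases

variable {Ω : Type} {m0 : MeasurableSpace Ω} {μ : Measure Ω} [IsProbabilityMeasure μ]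

lemma aux_caseII {K : ℕ} (hK : 0 < K) (R : ℕ → Ω → Fin K → Fin K → ℝ)
    (φ : ℝ → ℝ) (hφ0 : ∀ x, 0 ≤ x → 0 ≤ φ x)
    (hφpos : ∃ x₀ : ℝ, ∀ x, x₀ ≤ x → 0 < φ x)
    (hφmono : ∃ x₀ : ℝ, ∀ x y, x₀ ≤ x → x ≤ y → φ x ≤ φ y)
    (hφsum : Summable fun n : ℕ => 1 / (n * φ n))
    (M : ℝ≥0∞) (hM : M < ⊤)
    (hMb : ∀ n, 1 ≤ n →
      ∫⁻ ω, ENNReal.ofReal (matNorm (R n ω) * φ (matNorm (R n ω))) ∂μ ≤ M) :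
    ∑' k : ℕ, (∫⁻ ω, ENNReal.ofReal (matNorm (R (k+1) ω) *
        (if ((k+1 : ℕ) : ℝ) < matNorm (R (k+1) ω) then 1 else 0)) ∂μ)
      / ((k+1 : ℕ) : ℝ≥0∞) < ⊤ := by
  obtain ⟨x₁, hx₁⟩ := hφpos
  obtain ⟨x₂, hx₂⟩ := hφmono
  set X : ℕ → Ω → ℝ := fun k ω => matNorm (R k ω) *
    (if (k : ℝ) < matNorm (R k ω) then 1 else 0) with hXdef
  set T : ℕ → ℝ≥0∞ := fun k => ∫⁻ ω, ENNReal.ofReal (X k ω) ∂μ with hTdef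
  set K₀ : ℕ := ⌈max x₁ x₂⌉₊ + 1 with hK₀
  have hK₀1 : 1 ≤ K₀ := by omega
  have hK₀x₁ : x₁ ≤ (K₀ : ℝ) := le_trans (le_max_left _ _)
    (le_trans (Nat.le_ceil _) (by exact_mod_cast Nat.le_succ _))
  have hK₀x₂ : x₂ ≤ (K₀ : ℝ) := le_trans (le_max_right _ _)
    (le_trans (Nat.le_ceil _) (by exact_mod_cast Nat.le_succ _))
  -- Claim A : threshold bound
  have claimA : ∀ k : ℕ, 1 ≤ k → ∀ c : ℝ, x₁ ≤ c → x₂ ≤ c →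
      ∫⁻ ω, ENNReal.ofReal (matNorm (R k ω) *
        (if c < matNorm (R k ω) then 1 else 0)) ∂μ ≤ M / ENNReal.ofReal (φ c) := by
    intro k hk c hcx₁ hcx₂
    have hφc : 0 < φ c := hx₁ _ hcx₁
    have hpt : ∀ ω, ENNReal.ofReal (matNorm (R k ω) * (if c < matNorm (R k ω) then 1 else 0)) ≤
        ENNReal.ofReal (matNorm (R k ω) * φ (matNorm (R k ω))) / ENNReal.ofReal (φ c) := by
      intro ω
      set r := matNorm (R k ω) with hr
      have hr0 : 0 ≤ r := matNorm_nonneg hK _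
      rw [← ENNReal.ofReal_div_of_pos hφc]
      apply ENNReal.ofReal_le_ofReal
      by_cases hcase : c < r
      · rw [if_pos hcase, mul_one, le_div_iff₀ hφc]
        exact mul_le_mul_of_nonneg_left (hx₂ _ _ hcx₂ (le_of_lt hcase)) hr0
      · rw [if_neg hcase, mul_zero]
        exact div_nonneg (mul_nonneg hr0 (hφ0 _ hr0)) (le_of_lt hφc)
    calc ∫⁻ ω, ENNReal.ofReal (matNorm (R k ω) * (if c < matNorm (R k ω) then 1 else 0)) ∂μ
        ≤ ∫⁻ ω, ENNReal.ofReal (matNorm (R k ω) * φ (matNorm (R k ω)))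
          / ENNReal.ofReal (φ c) ∂μ := lintegral_mono hpt
      _ = (∫⁻ ω, ENNReal.ofReal (matNorm (R k ω) * φ (matNorm (R k ω))) ∂μ)
          / ENNReal.ofReal (φ c) := by
          simp_rw [div_eq_mul_inv]
          exact lintegral_mul_const' _ _
            (ENNReal.inv_ne_top.mpr (ne_of_gt (ENNReal.ofReal_pos.mpr hφc)))
      _ ≤ M / ENNReal.ofReal (φ c) := ENNReal.div_le_div_right (hMb k hk) _
  have hφK₀ : 0 < φ (K₀ : ℝ) := hx₁ _ hK₀x₁
  have hMdiv : M / ENNReal.ofReal (φ ((K₀:ℕ) : ℝ)) < ⊤ :=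
    ENNReal.div_lt_top hM.ne (ne_of_gt (ENNReal.ofReal_pos.mpr hφK₀))
  -- Claim B : T k < ⊤ for 1 ≤ k
  have claimB : ∀ k : ℕ, 1 ≤ k → T k < ⊤ := by
    intro k hk
    have hpt : ∀ ω, ENNReal.ofReal (X k ω)
        ≤ ENNReal.ofReal (K₀ : ℝ) + ENNReal.ofReal (matNorm (R k ω) *
            (if ((K₀:ℕ):ℝ) < matNorm (R k ω) then 1 else 0)) := by
      intro ω
      set r := matNorm (R k ω) with hr
      have hr0 : 0 ≤ r := matNorm_nonneg hK _
      have hK₀0 : (0:ℝ) ≤ (K₀:ℝ) := Nat.cast_nonneg _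
      rw [← ENNReal.ofReal_add hK₀0 (mul_nonneg hr0 (by split_ifs <;> norm_num))]
      apply ENNReal.ofReal_le_ofReal
      by_cases hbig : ((K₀:ℕ):ℝ) < r
      · rw [if_pos hbig, mul_one]
        have : X k ω ≤ r := by
          by_cases hcase : (k:ℝ) < r
          · simp [hXdef, if_pos hcase, ← hr]
          · simp [hXdef, if_neg hcase, hr0, ← hr]
        linarith
      · rw [if_neg hbig, mul_zero, add_zero]
        push_neg at hbig
        have : X k ω ≤ r := by
          by_cases hcase : (k:ℝ) < r
          · simp [hXdef, if_pos hcase, ← hr]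
          · simp [hXdef, if_neg hcase, hr0, ← hr]
        linarith
    calc T k ≤ ∫⁻ ω, (ENNReal.ofReal (K₀ : ℝ) + ENNReal.ofReal (matNorm (R k ω) *
            (if ((K₀:ℕ):ℝ) < matNorm (R k ω) then 1 else 0))) ∂μ := lintegral_mono hpt
      _ = ENNReal.ofReal (K₀ : ℝ) * μ Set.univ + ∫⁻ ω, ENNReal.ofReal (matNorm (R k ω) *
            (if ((K₀:ℕ):ℝ) < matNorm (R k ω) then 1 else 0)) ∂μ := by
          rw [lintegral_add_left measurable_const, lintegral_const]
      _ < ⊤ := by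
          have h1 := lt_of_le_of_lt (claimA k hk ((K₀:ℕ):ℝ) hK₀x₁ hK₀x₂) hMdiv
          have h2 : ENNReal.ofReal (K₀ : ℝ) * μ Set.univ < ⊤ :=
            ENNReal.mul_lt_top ENNReal.ofReal_lt_top (measure_lt_top _ _)
          exact ENNReal.add_lt_top.mpr ⟨h2, h1⟩
  -- summability of the tail weights
  set g : ℕ → ℝ := fun n => 1 / (n * φ n) with hgdef
  have hgpos : ∀ n : ℕ, K₀ ≤ n → 0 ≤ g n := by
    intro n hn
    have : 0 < φ (n:ℝ) := hx₁ _ (le_trans hK₀x₁ (by exact_mod_cast hn))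
    have hn0 : (0:ℝ) < n := by
      have : 1 ≤ n := le_trans hK₀1 hn
      exact_mod_cast this
    positivity
  have hgabs : Summable fun n : ℕ => max (g n) 0 :=
    (hφsum.abs).of_nonneg_of_le (fun n => le_max_right _ _)
      (fun n => max_le (le_abs_self _) (abs_nonneg _))
  -- final bound on the series
  have hbound : ∀ k : ℕ, (T (k+1)) / ((k+1 : ℕ) : ℝ≥0∞) ≤
      (if k + 1 < K₀ + 1 then T (k+1) / ((k+1 : ℕ) : ℝ≥0∞) else 0) +
      M * ENNReal.ofReal (max (g (k+1)) 0) := by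
    intro k
    by_cases hsmall : k + 1 < K₀ + 1
    · rw [if_pos hsmall]; exact le_add_of_nonneg_right zero_le
    · rw [if_neg hsmall, zero_add]
      push_neg at hsmall
      have hk1 : K₀ ≤ k + 1 := by omega
      have hx₁k : x₁ ≤ ((k+1 : ℕ) : ℝ) := le_trans hK₀x₁ (by exact_mod_cast hk1)
      have hx₂k : x₂ ≤ ((k+1 : ℕ) : ℝ) := le_trans hK₀x₂ (by exact_mod_cast hk1)
      have hφk : 0 < φ ((k+1 : ℕ) : ℝ) := hx₁ _ hx₁k
      have hnpos : (0:ℝ) < ((k+1:ℕ) : ℝ) := by positivity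
      have h1 : T (k+1) ≤ M / ENNReal.ofReal (φ ((k+1:ℕ):ℝ)) :=
        claimA (k+1) (by omega) _ hx₁k hx₂k
      have h2 : T (k+1) / ((k+1 : ℕ) : ℝ≥0∞)
          ≤ (M / ENNReal.ofReal (φ ((k+1:ℕ):ℝ))) / ((k+1 : ℕ) : ℝ≥0∞) :=
        ENNReal.div_le_div_right h1 _
      refine le_trans h2 (le_of_eq ?_)
      have hc0 : ENNReal.ofReal (φ ((k+1:ℕ):ℝ)) ≠ 0 := ne_of_gt (ENNReal.ofReal_pos.mpr hφk)
      have hc1 : ENNReal.ofReal (φ ((k+1:ℕ):ℝ)) ≠ ⊤ := ENNReal.ofReal_ne_top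
      have hd0 : ((k+1 : ℕ) : ℝ≥0∞) ≠ 0 := by exact_mod_cast Nat.succ_ne_zero k
      have hd1 : ((k+1 : ℕ) : ℝ≥0∞) ≠ ⊤ := by simp
      rw [div_eq_mul_inv, div_eq_mul_inv, mul_assoc, ← ENNReal.mul_inv (Or.inl hc0) (Or.inl hc1)]
      congr 1
      have hmax : max (g (k+1)) 0 = g (k+1) := max_eq_left (hgpos _ hk1)
      rw [hmax, hgdef]
      simp only [one_div]
      rw [ENNReal.ofReal_inv_of_pos (by positivity), ENNReal.ofReal_mul (le_of_lt hnpos)]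
      rw [ENNReal.ofReal_natCast]
      rw [mul_comm (ENNReal.ofReal (φ _))]
  calc ∑' k : ℕ, (T (k+1)) / ((k+1 : ℕ) : ℝ≥0∞)
      ≤ ∑' k : ℕ, ((if k + 1 < K₀ + 1 then T (k+1) / ((k+1 : ℕ) : ℝ≥0∞) else 0) +
        M * ENNReal.ofReal (max (g (k+1)) 0)) := ENNReal.tsum_le_tsum hbound
    _ = (∑' k : ℕ, (if k + 1 < K₀ + 1 then T (k+1) / ((k+1 : ℕ) : ℝ≥0∞) else 0)) +
        ∑' k : ℕ, M * ENNReal.ofReal (max (g (k+1)) 0) := ENNReal.tsum_add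
    _ < ⊤ := by
        refine ENNReal.add_lt_top.mpr ⟨?_, ?_⟩
        · rw [tsum_eq_sum (s := Finset.range K₀) (fun k hk => by
            rw [if_neg]; simp only [Finset.mem_range, not_lt] at hk; omega)]
          refine ENNReal.sum_lt_top.mpr fun k hk => ?_
          rw [if_pos (by simp only [Finset.mem_range] at hk; omega)]
          exact ENNReal.div_lt_top (claimB (k+1) (by omega)).ne
            (by exact_mod_cast Nat.succ_ne_zero k)
        · rw [ENNReal.tsum_mul_left,
            ← ENNReal.ofReal_tsum_of_nonneg (fun n => le_max_right _ _)
              ((summable_nat_add_iff 1).mpr hgabs)]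
          exact ENNReal.mul_lt_top hM ENNReal.ofReal_lt_top


lemma aux_caseI {K : ℕ} (hK : 0 < K) (R : ℕ → Ω → Fin K → Fin K → ℝ)
    (hXm : ∀ k : ℕ, 1 ≤ k → Measurable fun ω => matNorm (R k ω))
    (c : ℝ) (hc : 0 < c) (Rmaj : Ω → ℝ) (hRm : Measurable Rmaj) (hRpos : ∀ ω, 0 < Rmaj ω)
    (hRint : Integrable Rmaj μ)
    (hRlog : Integrable (fun ω => Rmaj ω * max (Real.log (Rmaj ω)) 0) μ)
    (hmaj : ∀ n, 1 ≤ n → ∀ x : ℝ, 0 < x →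
      μ {ω | x < matNorm (R n ω)} ≤ ENNReal.ofReal c * μ {ω | x < Rmaj ω}) :
    ∑' k : ℕ, (∫⁻ ω, ENNReal.ofReal (matNorm (R (k+1) ω) *
        (if ((k+1 : ℕ) : ℝ) < matNorm (R (k+1) ω) then 1 else 0)) ∂μ)
      / ((k+1 : ℕ) : ℝ≥0∞) < ⊤ := by
  set X : ℕ → Ω → ℝ := fun k ω => matNorm (R k ω) *
    (if (k : ℝ) < matNorm (R k ω) then 1 else 0) with hXdef
  set Y : ℕ → Ω → ℝ := fun k ω => Rmaj ω * (if (k : ℝ) < Rmaj ω then 1 else 0) with hYdef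
  have hXnn : ∀ k ω, 0 ≤ X k ω := by
    intro k ω
    exact mul_nonneg (matNorm_nonneg hK _) (by split_ifs <;> norm_num)
  have hYnn : ∀ k ω, 0 ≤ Y k ω := by
    intro k ω
    exact mul_nonneg (hRpos ω).le (by split_ifs <;> norm_num)
  have hYm : ∀ k : ℕ, Measurable (Y k) :=
    fun k => hRm.mul (Measurable.ite (measurableSet_lt measurable_const hRm)
      measurable_const measurable_const)
  have hXmeas : ∀ k : ℕ, 1 ≤ k → Measurable (X k) :=
    fun k hk => (hXm k hk).mul (Measurable.ite
      (measurableSet_lt measurable_const (hXm k hk)) measurable_const measurable_const)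
  -- Claim C : layer-cake comparison
  have claimC : ∀ k : ℕ, 1 ≤ k →
      ∫⁻ ω, ENNReal.ofReal (X k ω) ∂μ
        ≤ ENNReal.ofReal c * ∫⁻ ω, ENNReal.ofReal (Y k ω) ∂μ := by
    intro k hk
    rw [lintegral_eq_lintegral_meas_lt μ (ae_of_all _ (hXnn k)) (hXmeas k hk).aemeasurable,
        lintegral_eq_lintegral_meas_lt μ (ae_of_all _ (hYnn k)) (hYm k).aemeasurable,
        ← lintegral_const_mul' _ _ ENNReal.ofReal_ne_top]
    refine lintegral_mono_ae ((ae_restrict_iff' measurableSet_Ioi).2 (ae_of_all _ ?_))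
    intro t ht
    have ht' : (0:ℝ) < t := Set.mem_Ioi.mp ht
    have htk : (0:ℝ) < max t (k:ℝ) := lt_of_lt_of_le ht (le_max_left _ _)
    have hsetX : {ω | t < X k ω} = {ω | max t (k:ℝ) < matNorm (R k ω)} := by
      ext ω
      simp only [Set.mem_setOf_eq, hXdef, max_lt_iff]
      constructor
      · intro h
        by_cases hcase : (k:ℝ) < matNorm (R k ω)
        · rw [if_pos hcase, mul_one] at h; exact ⟨h, hcase⟩
        · rw [if_neg hcase, mul_zero] at h; linarith
      · rintro ⟨h1, h2⟩; rw [if_pos h2, mul_one]; exact h1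
    have hsetY : {ω | t < Y k ω} = {ω | max t (k:ℝ) < Rmaj ω} := by
      ext ω
      simp only [Set.mem_setOf_eq, hYdef, max_lt_iff]
      constructor
      · intro h
        by_cases hcase : (k:ℝ) < Rmaj ω
        · rw [if_pos hcase, mul_one] at h; exact ⟨h, hcase⟩
        · rw [if_neg hcase, mul_zero] at h; linarith
      · rintro ⟨h1, h2⟩; rw [if_pos h2, mul_one]; exact h1
    rw [hsetX, hsetY]
    exact hmaj k hk _ htk
  -- pointwise harmonic-sum bound
  have claimE : ∀ ω, ∑' k : ℕ, ENNReal.ofReal (Y (k+1) ω) * (((k+1 : ℕ)) : ℝ≥0∞)⁻¹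
      ≤ ENNReal.ofReal (Rmaj ω * (1 + max (Real.log (Rmaj ω)) 0)) := by
    intro ω
    set r := Rmaj ω with hrdef
    have hr : 0 < r := hRpos ω
    set m := ⌊r⌋₊ with hmdef
    have hzero : ∀ k ∉ Finset.range m, ENNReal.ofReal (Y (k+1) ω) * (((k+1 : ℕ)) : ℝ≥0∞)⁻¹ = 0 := by
      intro k hk
      simp only [Finset.mem_range, not_lt] at hk
      have : ¬ (((k+1 : ℕ)):ℝ) < r := by
        push_neg
        exact le_of_lt (lt_of_lt_of_le (Nat.lt_floor_add_one r)
          (by exact_mod_cast Nat.succ_le_succ hk : (m:ℝ) + 1 ≤ ((k+1:ℕ):ℝ)))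
      have this' : ¬ (((k+1 : ℕ)):ℝ) < r := this
      simp only [hYdef, ← hrdef, if_neg this', mul_zero, ENNReal.ofReal_zero, zero_mul]
    rw [tsum_eq_sum hzero]
    have hterm : ∀ k ∈ Finset.range m, ENNReal.ofReal (Y (k+1) ω) * (((k+1 : ℕ)) : ℝ≥0∞)⁻¹
        ≤ ENNReal.ofReal r * (((k+1 : ℕ)) : ℝ≥0∞)⁻¹ := by
      intro k _
      refine mul_le_mul_left (ENNReal.ofReal_le_ofReal ?_) _
      simp only [hYdef]
      split_ifs <;> simp [hr.le, ← hrdef]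
    refine le_trans (Finset.sum_le_sum hterm) ?_
    rw [← Finset.mul_sum]
    have hsum_eq : ∑ k ∈ Finset.range m, (((k+1 : ℕ)) : ℝ≥0∞)⁻¹
        = ENNReal.ofReal (∑ k ∈ Finset.range m, (((k+1 : ℕ)) : ℝ)⁻¹) := by
      rw [ENNReal.ofReal_sum_of_nonneg (fun k _ => by positivity)]
      refine Finset.sum_congr rfl fun k _ => ?_
      rw [ENNReal.ofReal_inv_of_pos (by positivity), ENNReal.ofReal_natCast]
    rw [hsum_eq]
    have hharm : ∑ k ∈ Finset.range m, (((k+1 : ℕ)) : ℝ)⁻¹ ≤ 1 + max (Real.log r) 0 := by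
      have hh : ∑ k ∈ Finset.range m, (((k+1 : ℕ)) : ℝ)⁻¹ = (harmonic m : ℝ) := by
        rw [harmonic]
        push_cast
        rfl
      rw [hh]
      rcases Nat.eq_zero_or_pos m with hm0 | hmpos
      · rw [hm0]
        simp only [harmonic_zero, Rat.cast_zero]
        have : (0:ℝ) ≤ max (Real.log r) 0 := le_max_right _ _
        linarith
      · refine le_trans (harmonic_le_one_add_log m) ?_
        have hlog : Real.log m ≤ Real.log r :=
          Real.log_le_log (by exact_mod_cast hmpos) (Nat.floor_le hr.le)
        have : Real.log m ≤ max (Real.log r) 0 := le_trans hlog (le_max_left _ _)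
        linarith
    calc ENNReal.ofReal r * ENNReal.ofReal (∑ k ∈ Finset.range m, (((k+1 : ℕ)) : ℝ)⁻¹)
        ≤ ENNReal.ofReal r * ENNReal.ofReal (1 + max (Real.log r) 0) :=
          mul_le_mul_right (ENNReal.ofReal_le_ofReal hharm) _
      _ = ENNReal.ofReal (r * (1 + max (Real.log r) 0)) := (ENNReal.ofReal_mul hr.le).symm
  -- Claim F : finiteness of the dominating integral
  have claimF : ∫⁻ ω, ENNReal.ofReal (Rmaj ω * (1 + max (Real.log (Rmaj ω)) 0)) ∂μ < ⊤ := by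
    have hgeq : (fun ω => Rmaj ω * (1 + max (Real.log (Rmaj ω)) 0))
        = fun ω => Rmaj ω + Rmaj ω * max (Real.log (Rmaj ω)) 0 := by
      funext ω; ring
    have hgint : Integrable (fun ω => Rmaj ω * (1 + max (Real.log (Rmaj ω)) 0)) μ := by
      rw [hgeq]; exact hRint.add hRlog
    have hgnn : 0 ≤ᵐ[μ] fun ω => Rmaj ω * (1 + max (Real.log (Rmaj ω)) 0) := by
      refine ae_of_all _ fun ω => ?_
      have h1 : (0:ℝ) ≤ max (Real.log (Rmaj ω)) 0 := le_max_right _ _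
      have h2 : (0:ℝ) < Rmaj ω := hRpos ω
      show (0:ℝ) ≤ Rmaj ω * (1 + max (Real.log (Rmaj ω)) 0)
      nlinarith
    have := hgint.hasFiniteIntegral
    rwa [hasFiniteIntegral_iff_ofReal hgnn] at this
  -- assemble
  calc ∑' k : ℕ, (∫⁻ ω, ENNReal.ofReal (X (k+1) ω) ∂μ) / ((k+1 : ℕ) : ℝ≥0∞)
      ≤ ∑' k : ℕ, (ENNReal.ofReal c * ∫⁻ ω, ENNReal.ofReal (Y (k+1) ω) ∂μ)
          / ((k+1 : ℕ) : ℝ≥0∞) :=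
        ENNReal.tsum_le_tsum fun k => ENNReal.div_le_div_right (claimC (k+1) (by omega)) _
    _ = ENNReal.ofReal c * ∑' k : ℕ,
          (∫⁻ ω, ENNReal.ofReal (Y (k+1) ω) ∂μ) * (((k+1 : ℕ)) : ℝ≥0∞)⁻¹ := by
        rw [← ENNReal.tsum_mul_left]
        refine tsum_congr fun k => ?_
        rw [div_eq_mul_inv, mul_assoc]
    _ = ENNReal.ofReal c * ∑' k : ℕ,
          ∫⁻ ω, ENNReal.ofReal (Y (k+1) ω) * (((k+1 : ℕ)) : ℝ≥0∞)⁻¹ ∂μ := by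
        congr 1
        refine tsum_congr fun k => ?_
        rw [lintegral_mul_const' _ _ (by simp : (((k+1 : ℕ)) : ℝ≥0∞)⁻¹ ≠ ⊤)]
    _ = ENNReal.ofReal c * ∫⁻ ω, ∑' k : ℕ,
          ENNReal.ofReal (Y (k+1) ω) * (((k+1 : ℕ)) : ℝ≥0∞)⁻¹ ∂μ := by
        rw [lintegral_tsum fun k =>
          (((hYm (k+1)).ennreal_ofReal).mul_const _).aemeasurable]
    _ ≤ ENNReal.ofReal c *
          ∫⁻ ω, ENNReal.ofReal (Rmaj ω * (1 + max (Real.log (Rmaj ω)) 0)) ∂μ :=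
        mul_le_mul_right (lintegral_mono claimE) _
    _ < ⊤ := ENNReal.mul_lt_top ENNReal.ofReal_lt_top claimF

end Cases

/-- **Proposition.**  In an urn model satisfying Assumption 1 and either (i) the
majorization Assumption 2(a) with `E(R log_+ R) < ∞`, or (ii) Assumption 2(b), the tail
conditional expectations are Cesaro negligible:
`(1/n) Σ_{k=1}^n E[‖R_k‖ 1{‖R_k‖ > k} | F_{k−1}] → 0` almost surely. -/
theorem urn_tail_condexp_cesaro
    {Ω : Type} {m0 : MeasurableSpace Ω} {μ : Measure Ω} [IsProbabilityMeasure μ]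
    {K : ℕ} (hK : 0 < K)
    (F : Filtration ℕ m0)
    (C : ℕ → Ω → Fin K → ℝ) (R : ℕ → Ω → Fin K → Fin K → ℝ) (χ : ℕ → Ω → Fin K)
    (S : ℕ → Ω → ℝ) (hS : ∀ n ω, S n ω = ∑ i, C n ω i)
    (N : ℕ → Ω → Fin K → ℝ)
    (hN : ∀ n ω i, N n ω i = ∑ m ∈ Finset.Icc 1 n, (if χ m ω = i then (1:ℝ) else 0))
    -- evolution of the composition vector and nonnegativity of replacements
    (hEvol : ∀ n, 1 ≤ n → ∀ ω j, C n ω j = C (n-1) ω j + R n ω (χ n ω) j)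
    (hRnonneg : ∀ n, 1 ≤ n → ∀ ω i j, 0 ≤ R n ω i j)
    -- adaptedness to the filtration `F_n = σ(C_0, (R_m, χ_m)_{m ≤ n})`
    (hC0meas : Measurable[F 0] (C 0))
    (hχmeas : ∀ n, Measurable[F n] (χ n))
    (hRmeas : ∀ n, Measurable[F n] (R n))
    (hRint : ∀ n, 1 ≤ n → ∀ i j, Integrable (fun ω => R n ω i j) μ)
    -- Assumption 1
    (hC0nonneg : ∀ ω i, 0 ≤ C 0 ω i)
    (hC0ne : ∀ ω, C 0 ω ≠ 0)
    (hC0int : ∀ i, Integrable (fun ω => C 0 ω i) μ)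
    (hCond : ∀ n, 1 ≤ n → ∀ i,
      μ[fun ω => (if χ n ω = i then (1:ℝ) else 0) | F (n-1)]
        =ᵐ[μ] fun ω => C (n-1) ω i / S (n-1) ω)
    (hCondIndep : ∀ n, 1 ≤ n → ∀ (i : Fin K) (B : Set (Fin K → Fin K → ℝ)),
      MeasurableSet B →
      μ[fun ω => (if χ n ω = i then (1:ℝ) else 0) * Set.indicator B 1 (R n ω) | F (n-1)]
        =ᵐ[μ] fun ω =>
          (μ[fun ω' => (if χ n ω' = i then (1:ℝ) else 0) | F (n-1)]) ω *
          (μ[fun ω' => Set.indicator B 1 (R n ω') | F (n-1)]) ω)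
    -- (i) Assumption 2(a) with `E(R log_+ R) < ∞`, or (ii) Assumption 2(b)
    (hA2 :
      (∃ c : ℝ, 0 < c ∧ ∃ Rmaj : Ω → ℝ, Measurable Rmaj ∧ (∀ ω, 0 < Rmaj ω) ∧
        Integrable Rmaj μ ∧
        Integrable (fun ω => Rmaj ω * max (Real.log (Rmaj ω)) 0) μ ∧
        ∀ n, 1 ≤ n → ∀ x : ℝ, 0 < x →
          μ {ω | x < matNorm (R n ω)} ≤ ENNReal.ofReal c * μ {ω | x < Rmaj ω}) ∨
      (∃ φ : ℝ → ℝ, (∀ x, 0 ≤ x → 0 ≤ φ x) ∧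
        (∃ x₀ : ℝ, ∀ x, x₀ ≤ x → 0 < φ x) ∧
        (∃ x₀ : ℝ, ∀ x y, x₀ ≤ x → x ≤ y → φ x ≤ φ y) ∧
        (Summable fun n : ℕ => 1 / (n * φ n)) ∧
        (∃ x₀ : ℝ, ∀ x y, x₀ ≤ x → x ≤ y → x / φ x ≤ y / φ y) ∧
        (∃ M : ℝ≥0∞, M < ⊤ ∧ ∀ n, 1 ≤ n →
          ∫⁻ ω, ENNReal.ofReal (matNorm (R n ω) * φ (matNorm (R n ω))) ∂μ ≤ M))) :
    ∀ᵐ ω ∂μ, Tendsto (fun n : ℕ =>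
        (n : ℝ)⁻¹ * ∑ k ∈ Finset.Icc 1 n,
          (μ[fun ω' => matNorm (R k ω') *
            (if (k : ℝ) < matNorm (R k ω') then 1 else 0) | F (k-1)]) ω)
      atTop (𝓝 0) := by
  classical
  have hmatmeas : ∀ k : ℕ, 1 ≤ k → Measurable fun ω => matNorm (R k ω) := by
    intro k hk
    exact (measurable_matNorm hK).comp ((hRmeas k).mono (F.le k) le_rfl)
  set X : ℕ → Ω → ℝ := fun k ω => matNorm (R k ω) *
    (if (k : ℝ) < matNorm (R k ω) then 1 else 0) with hXdef
  have hXnn : ∀ k ω, 0 ≤ X k ω := fun k ω =>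
    mul_nonneg (matNorm_nonneg hK _) (by split_ifs <;> norm_num)
  have hXm : ∀ k : ℕ, 1 ≤ k → AEStronglyMeasurable (X k) μ := by
    intro k hk
    exact ((hmatmeas k hk).mul (Measurable.ite
      (measurableSet_lt measurable_const (hmatmeas k hk)) measurable_const
      measurable_const)).aestronglyMeasurable
  have hsum : ∑' k : ℕ, (∫⁻ ω, ENNReal.ofReal (X (k+1) ω) ∂μ) / ((k+1 : ℕ) : ℝ≥0∞) < ⊤ := by
    rcases hA2 with ⟨c, hc, Rmaj, hRm, hRpos, hRint1, hRlog, hmaj⟩ |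
      ⟨φ, hφ0, hφpos, hφmono, hφsum, -, M, hM, hMb⟩
    · exact aux_caseI hK R hmatmeas c hc Rmaj hRm hRpos hRint1 hRlog hmaj
    · exact aux_caseII hK R φ hφ0 hφpos hφmono hφsum M hM hMb
  exact aux_main F X hXnn hXm hsum

end
end

section
/- Fix d ≥ 1, p, q ∈ (0,1) and a > 0. Let R be the (d+1)×(d+1) matrix (rows and columns indexed 0,1,…,d) with row 0 equal to (1 + pa, (1−p)a/d, …, (1−p)a/d) and, for each i = 1,…,d, row i having entry 1−q in column 0, entry q+a in column i, and 0 elsewhere. Then R is irreducible, its dominant (Perron–Frobenius) eigenvalue equals 1+a, and the left eigenvector of R for the eigenvalue 1+a, normalized to be a probability vector, equals (1/(d(1−q+a(1−p))))·( d(1−q), a(1−p), …, a(1−p) ). -/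
open Matrix

set_option maxHeartbeats 2000000 in
/-- **Lemma (mean replacement matrix of the delayed ERW).**
For `d ≥ 1`, `p, q ∈ (0,1)` and `a > 0`, the `(d+1)×(d+1)` matrix `R` with row `0` equal to
`(1+pa, (1−p)a/d, …, (1−p)a/d)` and, for `i ≥ 1`, row `i` having entry `1−q` in column `0`,
`q+a` in column `i` and `0` elsewhere, is irreducible; its dominant (Perron–Frobenius)
eigenvalue equals `1+a`, and its left eigenvector for `1+a`, normalized to a probability
vector, is `(1/(d(1−q+a(1−p))))·(d(1−q), a(1−p), …, a(1−p))`. -/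
theorem erw_mean_matrix_perron_frobenius
    (d : ℕ) (hd : 1 ≤ d) (p q a : ℝ)
    (hp : 0 < p ∧ p < 1) (hq : 0 < q ∧ q < 1) (ha : 0 < a)
    (R : Matrix (Fin (d+1)) (Fin (d+1)) ℝ)
    (hR : ∀ i j, R i j =
      if i = 0 then (if j = 0 then 1 + p * a else (1 - p) * a / d)
      else if j = 0 then 1 - q else if j = i then q + a else 0)
    (π : Fin (d+1) → ℝ)
    (hπ : ∀ i, π i = (1 / (d * (1 - q + a * (1 - p)))) *
      (if i = 0 then (d : ℝ) * (1 - q) else a * (1 - p))) :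
    -- irreducibility
    (∀ i j, ∃ N : ℕ, 1 ≤ N ∧ 0 < (R ^ N) i j) ∧
    -- `1 + a` is an eigenvalue and dominates the real part of every eigenvalue
    ((1 + a : ℂ) ∈ spectrum ℂ (R.map (Complex.ofReal)) ∧
      ∀ z ∈ spectrum ℂ (R.map (Complex.ofReal)), z.re ≤ 1 + a) ∧
    -- `π` is the normalized strictly positive left eigenvector for `1 + a` …
    (Matrix.vecMul π R = (1 + a) • π ∧ (∀ i, 0 < π i) ∧ ∑ i, π i = 1) ∧
    -- … and it is the unique such vector
    (∀ v : Fin (d+1) → ℝ,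
      Matrix.vecMul v R = (1 + a) • v → (∀ i, 0 < v i) → (∑ i, v i = 1) → v = π) := by
  obtain ⟨hp0, hp1⟩ := hp
  obtain ⟨hq0, hq1⟩ := hq
  have hd0 : (0:ℝ) < d := by exact_mod_cast Nat.lt_of_lt_of_le Nat.zero_lt_one hd
  have hdne : (d:ℝ) ≠ 0 := ne_of_gt hd0
  have h1p : (0:ℝ) < 1 - p := by linarith
  have h1q : (0:ℝ) < 1 - q := by linarith
  have hden : (0:ℝ) < 1 - q + a * (1 - p) := by nlinarith
  have hDen : (d:ℝ) * (1 - q + a * (1 - p)) ≠ 0 := ne_of_gt (mul_pos hd0 hden)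
  have hnonneg : ∀ i j, 0 ≤ R i j := by
    intro i j; rw [hR]
    have h1 : 0 ≤ (1 - p) * a / d := by positivity
    split_ifs <;> nlinarith
  have hcol0 : ∀ i, 0 < R i 0 := by
    intro i; rw [hR]
    split_ifs <;> first | nlinarith | simp_all
  have hrow0 : ∀ j, 0 < R 0 j := by
    intro j; rw [hR, if_pos rfl]
    have h1 : 0 < (1 - p) * a / d := by positivity
    split_ifs <;> nlinarith
  have hsum : ∀ i, ∑ j, R i j = 1 + a := by
    intro i
    rcases eq_or_ne i 0 with rfl | hi
    · simp only [hR, if_pos rfl]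
      rw [Fin.sum_univ_succ]
      simp only [Fin.succ_ne_zero, if_neg, if_pos rfl, Finset.sum_const,
        Finset.card_univ, Fintype.card_fin, nsmul_eq_mul, if_false, ↓reduceIte]
      field_simp
      ring
    · obtain ⟨k, rfl⟩ := Fin.exists_succ_eq.mpr hi
      simp only [hR, if_neg (Fin.succ_ne_zero k)]
      rw [Fin.sum_univ_succ]
      simp only [if_pos rfl, Fin.succ_ne_zero, if_false, Fin.succ_inj,
        Finset.sum_ite_eq', Finset.mem_univ, if_true]
      ring
  have hsumC : ∀ i, ∑ j, ((R i j : ℝ) : ℂ) = 1 + (a : ℂ) := by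
    intro i
    rw [← Complex.ofReal_sum, hsum i]
    push_cast; ring
  refine ⟨?_, ⟨?_, ?_⟩, ⟨?_, ?_, ?_⟩, ?_⟩
  · -- irreducibility
    intro i j
    refine ⟨2, one_le_two, ?_⟩
    rw [pow_two, Matrix.mul_apply]
    refine Finset.sum_pos' (fun k _ => mul_nonneg (hnonneg i k) (hnonneg k j))
      ⟨0, Finset.mem_univ _, mul_pos (hcol0 i) (hrow0 j)⟩
  · -- 1+a ∈ spectrum
    rw [spectrum.mem_iff, Matrix.isUnit_iff_isUnit_det, isUnit_iff_ne_zero, not_not,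
      ← Matrix.exists_mulVec_eq_zero_iff]
    refine ⟨fun _ => 1, fun h => by simpa using congrFun h 0, ?_⟩
    ext i
    simp only [Matrix.mulVec, dotProduct, Matrix.sub_apply, Matrix.algebraMap_matrix_apply,
      Matrix.map_apply, mul_one, Finset.sum_sub_distrib, Finset.sum_ite_eq,
      Finset.mem_univ, if_true, Pi.zero_apply, Algebra.algebraMap_self, RingHom.id_apply]
    rw [hsumC i]
    ring
  · -- dominance
    intro z hz
    rw [spectrum.mem_iff, Matrix.isUnit_iff_isUnit_det, isUnit_iff_ne_zero, not_not,
      ← Matrix.exists_mulVec_eq_zero_iff] at hz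
    obtain ⟨v, hv0, hv⟩ := hz
    have hev : ∀ i, ∑ j, ((R i j : ℝ) : ℂ) * v j = z * v i := by
      intro i
      have h := congrFun hv i
      simp only [Matrix.mulVec, dotProduct, Matrix.sub_apply, Matrix.algebraMap_matrix_apply,
        Matrix.map_apply, sub_mul, Finset.sum_sub_distrib, ite_mul, zero_mul,
        Finset.sum_ite_eq, Finset.mem_univ, if_true, Pi.zero_apply,
        Algebra.algebraMap_self, RingHom.id_apply] at h
      linear_combination -h
    obtain ⟨i, -, hi⟩ := Finset.exists_max_image Finset.univ
      (fun k => ‖v k‖) ⟨0, Finset.mem_univ 0⟩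
    have hvi : 0 < ‖v i‖ := by
      obtain ⟨k, hk⟩ := Function.ne_iff.mp hv0
      exact lt_of_lt_of_le (by simpa using hk) (hi k (Finset.mem_univ k))
    have key : ‖z‖ * ‖v i‖ ≤ (1 + a) * ‖v i‖ := by
      calc ‖z‖ * ‖v i‖ = ‖z * v i‖ := (norm_mul z (v i)).symm
        _ = ‖∑ j, ((R i j : ℝ) : ℂ) * v j‖ := by rw [hev i]
        _ ≤ ∑ j, ‖((R i j : ℝ) : ℂ) * v j‖ := norm_sum_le _ _
        _ = ∑ j, R i j * ‖v j‖ := by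
            refine Finset.sum_congr rfl fun j _ => ?_
            rw [norm_mul, Complex.norm_real, Real.norm_eq_abs, abs_of_nonneg (hnonneg i j)]
        _ ≤ ∑ j, R i j * ‖v i‖ :=
            Finset.sum_le_sum fun j _ =>
              mul_le_mul_of_nonneg_left (hi j (Finset.mem_univ j)) (hnonneg i j)
        _ = (1 + a) * ‖v i‖ := by rw [← Finset.sum_mul, hsum i]
    have hza : ‖z‖ ≤ 1 + a := le_of_mul_le_mul_right key hvi
    exact (Complex.re_le_norm z).trans hza
  · -- π is left eigenvector
    ext j
    simp only [Matrix.vecMul, dotProduct, Pi.smul_apply, smul_eq_mul]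
    rcases eq_or_ne j 0 with rfl | hj
    · rw [Fin.sum_univ_succ]
      simp only [hR, hπ, if_pos rfl, Fin.succ_ne_zero, if_false, Finset.sum_const,
        Finset.card_univ, Fintype.card_fin, nsmul_eq_mul, ↓reduceIte]
      field_simp
      ring
    · obtain ⟨k, rfl⟩ := Fin.exists_succ_eq.mpr hj
      rw [Fin.sum_univ_succ]
      simp only [hR, hπ, if_pos rfl, Fin.succ_ne_zero, if_false, Fin.succ_inj, ite_mul,
        mul_ite, mul_zero, Finset.sum_ite_eq', Finset.sum_ite_eq, Finset.mem_univ, if_true, ↓reduceIte]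
      field_simp
      ring
  · -- positivity of π
    intro i
    rw [hπ]
    rcases eq_or_ne i 0 with rfl | hi
    · rw [if_pos rfl]
      exact mul_pos (by positivity) (mul_pos hd0 h1q)
    · rw [if_neg hi]
      exact mul_pos (by positivity) (mul_pos ha h1p)
  · -- sum of π = 1
    rw [Fin.sum_univ_succ]
    simp only [hπ, if_pos rfl, Fin.succ_ne_zero, if_false, Finset.sum_const,
      Finset.card_univ, Fintype.card_fin, nsmul_eq_mul, ↓reduceIte]
    field_simp
  · -- uniqueness
    intro v hv hpos hsumv
    have hcancel : (d:ℝ) * ((1 - p) * a / d) = (1 - p) * a := by field_simp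
    have hj : ∀ k : Fin d, v k.succ * ((d:ℝ) * (1 - q)) = v 0 * ((1 - p) * a) := by
      intro k
      have h := congrFun hv k.succ
      simp only [Matrix.vecMul, dotProduct, Pi.smul_apply, smul_eq_mul] at h
      rw [Fin.sum_univ_succ] at h
      simp only [hR, if_pos rfl, Fin.succ_ne_zero, if_false, Fin.succ_inj, mul_ite,
        mul_zero, Finset.sum_ite_eq', Finset.sum_ite_eq, Finset.mem_univ, if_true] at h
      linear_combination (-(d:ℝ)) * h + v 0 * hcancel
    rw [Fin.sum_univ_succ] at hsumv
    have hs : (∑ k : Fin d, v k.succ) * ((d:ℝ) * (1 - q)) = d * (v 0 * ((1 - p) * a)) := by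
      calc (∑ k : Fin d, v k.succ) * ((d:ℝ) * (1 - q))
          = ∑ k : Fin d, v k.succ * ((d:ℝ) * (1 - q)) := by rw [Finset.sum_mul]
        _ = ∑ _k : Fin d, v 0 * ((1 - p) * a) := Finset.sum_congr rfl fun k _ => hj k
        _ = d * (v 0 * ((1 - p) * a)) := by
            rw [Finset.sum_const, Finset.card_univ, Fintype.card_fin, nsmul_eq_mul]
    have hkeyd : v 0 * (1 - q + a * (1 - p)) * d = (1 - q) * d := by
      linear_combination -hs + ((d:ℝ) * (1 - q)) * hsumv
    have hkey : v 0 * (1 - q + a * (1 - p)) = 1 - q := mul_right_cancel₀ hdne hkeyd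
    ext i
    rcases eq_or_ne i 0 with rfl | hi
    · rw [hπ, if_pos rfl]
      field_simp
      linear_combination hkey
    · obtain ⟨k, rfl⟩ := Fin.exists_succ_eq.mpr hi
      have h2 : v k.succ * ((d:ℝ) * (1 - q + a * (1 - p))) = a * (1 - p) := by
        refine mul_right_cancel₀ (ne_of_gt h1q) ?_
        linear_combination (1 - q + a * (1 - p)) * hj k + (1 - p) * a * hkey
      rw [hπ, if_neg (Fin.succ_ne_zero k)]
      field_simp
      linear_combination h2
end
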